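/- arXiv:1703.06482 — 6 statements merged into one kernel-verified Lean document; each statement's English description precedes it below -/
import Mathlib

section
/- For integers n and k with 1 ≤ k ≤ n−2, the set {v_1, …, v_{n−1}} is a resolving set for the entire vertex set of G_{n,k}. -/
/-- Vertex set of the graph `G_{n,k}`: vertices `v_i` for `i ∈ [n]` (as `Sum.inl i`)
and `w_A` for `A` a `k`-element subset of `[n]` (as `Sum.inr A`). -/
abbrev Vnk (n k : ℕ) := Fin n ⊕ {A : Finset (Fin n) // A.card = k}

/-- The graph `G_{n,k}`: edges `w_A w_B` for all distinct `k`-subsets `A, B`,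
and `v_i w_A` whenever `i ∉ A`. -/
def Gnk (n k : ℕ) : SimpleGraph (Vnk n k) where
  Adj u v :=
    match u, v with
    | Sum.inl _, Sum.inl _ => False
    | Sum.inl i, Sum.inr A => i ∉ A.1
    | Sum.inr A, Sum.inl i => i ∉ A.1
    | Sum.inr A, Sum.inr B => A ≠ B
  symm := by
    constructor
    rintro (i | A) (j | B) h
    · exact h
    · exact h
    · exact h
    · exact fun e => h e.symm
  loopless := by
    constructor
    rintro (i | A) h
    · exact h
    · exact h rfl


section helpers
variable {V : Type*} {G : SimpleGraph V} {u v : V}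

lemma dist_eq_two' (hne : u ≠ v) (hadj : ¬ G.Adj u v) (p : G.Walk u v) (hp : p.length = 2) :
    G.dist u v = 2 := by
  have h2 : G.dist u v ≤ 2 := hp ▸ G.dist_le p
  have h0 : G.dist u v ≠ 0 := by
    rw [ne_eq, SimpleGraph.dist_eq_zero_iff_eq_or_not_reachable]
    push_neg
    exact ⟨hne, ⟨p⟩⟩
  have h1 : G.dist u v ≠ 1 := fun h => hadj (SimpleGraph.dist_eq_one_iff_adj.mp h)
  omega
end helpers

variable {n k : ℕ}

lemma exists_avoid (hkn : k + 2 ≤ n) (i j : Fin n) :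
    ∃ A : Finset (Fin n), A.card = k ∧ i ∉ A ∧ j ∉ A := by
  have hcard : k ≤ ({i, j} : Finset (Fin n))ᶜ.card := by
    rw [Finset.card_compl]
    have := Finset.card_insert_le i ({j} : Finset (Fin n))
    simp only [Finset.card_singleton, Fintype.card_fin] at *
    omega
  obtain ⟨A, hsub, hcardA⟩ := Finset.exists_subset_card_eq hcard
  refine ⟨A, hcardA, fun h => ?_, fun h => ?_⟩
  · exact (Finset.mem_compl.mp (hsub h)) (by simp)
  · exact (Finset.mem_compl.mp (hsub h)) (by simp)

lemma dist_wv_of_not_mem {A : {A : Finset (Fin n) // A.card = k}} {i : Fin n} (h : i ∉ A.1) :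
    (Gnk n k).dist (Sum.inr A) (Sum.inl i) = 1 :=
  SimpleGraph.dist_eq_one_iff_adj.mpr h

lemma dist_wv_of_mem (hkn : k + 2 ≤ n) {A : {A : Finset (Fin n) // A.card = k}} {i : Fin n}
    (h : i ∈ A.1) : (Gnk n k).dist (Sum.inr A) (Sum.inl i) = 2 := by
  obtain ⟨B, hB, hiB, -⟩ := exists_avoid hkn i i
  have hAB : A ≠ (⟨B, hB⟩ : {A : Finset (Fin n) // A.card = k}) := by
    intro e; rw [e] at h; exact hiB h
  exact dist_eq_two' (by simp) (fun hadj => hadj h)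
    (SimpleGraph.Walk.cons (show (Gnk n k).Adj (Sum.inr A) (Sum.inr ⟨B, hB⟩) from hAB)
      (SimpleGraph.Adj.toWalk (show (Gnk n k).Adj (Sum.inr ⟨B, hB⟩) (Sum.inl i) from hiB))) rfl

lemma dist_vv (hkn : k + 2 ≤ n) {i j : Fin n} (h : i ≠ j) :
    (Gnk n k).dist (Sum.inl i) (Sum.inl j) = 2 := by
  obtain ⟨B, hB, hiB, hjB⟩ := exists_avoid hkn i j
  exact dist_eq_two' (by simp [h]) (fun hadj => hadj)
    (SimpleGraph.Walk.cons (show (Gnk n k).Adj (Sum.inl i) (Sum.inr ⟨B, hB⟩) from hiB)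
      (SimpleGraph.Adj.toWalk (show (Gnk n k).Adj (Sum.inr ⟨B, hB⟩) (Sum.inl j) from hjB))) rfl

/-- For `1 ≤ k ≤ n - 2`, the set `{v_1, …, v_{n-1}}` (all `v_i` except the last one)
is a resolving set for the entire vertex set of `G_{n,k}`. -/
theorem stmt3 (n k : ℕ) (hk : 1 ≤ k) (hkn : k ≤ n - 2) :
    ∀ u u' : Vnk n k, u ≠ u' →
      ∃ i : Fin n, (i : ℕ) < n - 1 ∧
        (Gnk n k).dist u (Sum.inl i) ≠ (Gnk n k).dist u' (Sum.inl i) := by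
  have hn : k + 2 ≤ n := by omega
  have hn3 : 3 ≤ n := by omega
  -- key: resolving a v-vertex against a w-vertex
  have key : ∀ (j : Fin n) (A : {A : Finset (Fin n) // A.card = k}),
      ∃ i : Fin n, (i : ℕ) < n - 1 ∧
        (Gnk n k).dist (Sum.inl j) (Sum.inl i) ≠ (Gnk n k).dist (Sum.inr A) (Sum.inl i) := by
    intro j A
    by_cases hj : (j : ℕ) < n - 1
    · refine ⟨j, hj, ?_⟩
      rw [SimpleGraph.dist_self]
      by_cases hmem : j ∈ A.1
      · rw [dist_wv_of_mem hn hmem]; omega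
      · rw [dist_wv_of_not_mem hmem]; omega
    · have hjval : (j : ℕ) = n - 1 := by have := j.isLt; omega
      have hcompl : ((insert j A.1)ᶜ : Finset (Fin n)).Nonempty := by
        rw [← Finset.card_pos, Finset.card_compl, Fintype.card_fin]
        have h1 := Finset.card_insert_le j A.1
        rw [A.2] at h1
        omega
      obtain ⟨i, hi⟩ := hcompl
      rw [Finset.mem_compl, Finset.mem_insert, not_or] at hi
      have hij : i ≠ j := hi.1
      have hival : (i : ℕ) < n - 1 := by
        have := i.isLt
        have : (i : ℕ) ≠ n - 1 := fun e => hij (Fin.ext (e.trans hjval.symm))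
        omega
      refine ⟨i, hival, ?_⟩
      rw [dist_vv hn (Ne.symm hij), dist_wv_of_not_mem hi.2]
      omega
  rintro (j | A) (j' | A') hne
  · have hjj' : j ≠ j' := fun e => hne (congrArg Sum.inl e)
    by_cases hj : (j : ℕ) < n - 1
    · refine ⟨j, hj, ?_⟩
      rw [SimpleGraph.dist_self, dist_vv hn (Ne.symm hjj')]
      omega
    · have hj'val : (j' : ℕ) < n - 1 := by
        have h1 := j.isLt
        have h2 := j'.isLt
        have : (j' : ℕ) ≠ (j : ℕ) := fun e => hjj' (Fin.ext e.symm)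
        omega
      refine ⟨j', hj'val, ?_⟩
      rw [SimpleGraph.dist_self, dist_vv hn hjj']
      omega
  · exact key j A'
  · obtain ⟨i, hi, hd⟩ := key j' A
    exact ⟨i, hi, hd.symm⟩
  · have hAA' : A.1 ≠ A'.1 := fun e => hne (congrArg Sum.inr (Subtype.ext e))
    have h1 : (A.1 \ A'.1).Nonempty := by
      rw [Finset.sdiff_nonempty]
      exact fun hsub => hAA' (Finset.eq_of_subset_of_card_le hsub (by rw [A.2, A'.2]))
    have h2 : (A'.1 \ A.1).Nonempty := by
      rw [Finset.sdiff_nonempty]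
      exact fun hsub => hAA'.symm (Finset.eq_of_subset_of_card_le hsub (by rw [A.2, A'.2]))
    obtain ⟨a, ha⟩ := h1
    obtain ⟨b, hb⟩ := h2
    rw [Finset.mem_sdiff] at ha hb
    by_cases hav : (a : ℕ) < n - 1
    · refine ⟨a, hav, ?_⟩
      rw [dist_wv_of_mem hn ha.1, dist_wv_of_not_mem ha.2]
      omega
    · have haval : (a : ℕ) = n - 1 := by have := a.isLt; omega
      have hab : a ≠ b := fun e => hb.2 (e ▸ ha.1)
      have hbv : (b : ℕ) < n - 1 := by
        have := b.isLt
        have : (b : ℕ) ≠ n - 1 := fun e => hab (Fin.ext (haval.trans e.symm))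
        omega
      refine ⟨b, hbv, ?_⟩
      rw [dist_wv_of_not_mem hb.2, dist_wv_of_mem hn hb.1]
      omega
end

section
/- For integers n and k with 1 ≤ k ≤ n−2, no set of at most n−2 vertices of G_{n,k} is a resolving set for W = {w_A : A a k-element subset of [n]}: for every set S of vertices of G_{n,k} with |S| ≤ n−2 there exist distinct k-element subsets A and B of [n] such that dist(w_A, s) = dist(w_B, s) for every s ∈ S. -/
lemma choose_ge (m r : ℕ) (h1 : 1 ≤ r) (h2 : r ≤ m - 1) : m ≤ m.choose r := by
  induction m generalizing r with
  | zero => omega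
  | succ m ih =>
    obtain ⟨r', rfl⟩ : ∃ r', r = r' + 1 := ⟨r - 1, by omega⟩
    rw [Nat.choose_succ_succ]
    rcases Nat.eq_zero_or_pos r' with h | h
    · subst h; simp
    · have h1' : m ≤ m.choose r' := ih r' h (by omega)
      have h2' : 0 < m.choose (r' + 1) := Nat.choose_pos (by omega)
      simp only [Nat.succ_eq_add_one]
      omega

lemma dist_ww (n k : ℕ) (A B : {A : Finset (Fin n) // A.card = k}) (h : A ≠ B) :
    (Gnk n k).dist (Sum.inr A) (Sum.inr B) = 1 :=
  (SimpleGraph.dist_eq_one_iff_adj).2 h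

lemma dist_wv_not (n k : ℕ) (A : {A : Finset (Fin n) // A.card = k}) (i : Fin n)
    (h : i ∉ A.1) : (Gnk n k).dist (Sum.inr A) (Sum.inl i) = 1 :=
  (SimpleGraph.dist_eq_one_iff_adj).2 h

lemma dist_wv_mem (n k : ℕ) (hk : 1 ≤ k) (hkn : k ≤ n - 2)
    (A : {A : Finset (Fin n) // A.card = k}) (i : Fin n)
    (h : i ∈ A.1) : (Gnk n k).dist (Sum.inr A) (Sum.inl i) = 2 := by
  obtain ⟨B, hBsub, hBcard⟩ : ∃ B ⊆ ({i}ᶜ : Finset (Fin n)), B.card = k := by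
    apply Finset.exists_subset_card_eq
    rw [Finset.card_compl, Finset.card_singleton, Fintype.card_fin]
    omega
  have hiB : i ∉ B := fun hmem => by simpa using hBsub hmem
  set B' : {A : Finset (Fin n) // A.card = k} := ⟨B, hBcard⟩ with hB'
  have hne : A ≠ B' := by intro e; apply hiB; rw [e] at h; exact h
  have adj1 : (Gnk n k).Adj (Sum.inr A) (Sum.inr B') := hne
  have adj2 : (Gnk n k).Adj (Sum.inr B') (Sum.inl i) := hiB
  let p : (Gnk n k).Walk (Sum.inr A) (Sum.inl i) :=
    SimpleGraph.Walk.cons adj1 (SimpleGraph.Walk.cons adj2 SimpleGraph.Walk.nil)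
  have hle : (Gnk n k).dist (Sum.inr A) (Sum.inl i) ≤ 2 := by
    have := SimpleGraph.dist_le p
    simpa [p] using this
  have hne0 : (Gnk n k).dist (Sum.inr A) (Sum.inl i) ≠ 0 := by
    have hr : (Gnk n k).Reachable (Sum.inr A) (Sum.inl i) := ⟨p⟩
    exact Nat.pos_iff_ne_zero.mp (hr.pos_dist_of_ne (by simp))
  have hne1 : (Gnk n k).dist (Sum.inr A) (Sum.inl i) ≠ 1 := by
    rw [Ne, SimpleGraph.dist_eq_one_iff_adj]
    exact fun hadj => hadj h
  omega


/-- For `1 ≤ k ≤ n - 2`, no set of at most `n - 2` vertices of `G_{n,k}` resolves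
`W = {w_A}`: for every such set `S` there are distinct `k`-subsets `A ≠ B` with
`dist(w_A, s) = dist(w_B, s)` for all `s ∈ S`. -/
theorem stmt4 (n k : ℕ) (hk : 1 ≤ k) (hkn : k ≤ n - 2)
    (S : Finset (Vnk n k)) (hS : S.card ≤ n - 2) :
    ∃ A B : {A : Finset (Fin n) // A.card = k}, A ≠ B ∧
      ∀ s ∈ S, (Gnk n k).dist (Sum.inr A) s = (Gnk n k).dist (Sum.inr B) s := by
  classical
  have hn : 3 ≤ n := by omega
  set I : Finset (Fin n) := Finset.univ.filter (fun i => Sum.inl i ∈ S) with hIdef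
  set T : Finset {A : Finset (Fin n) // A.card = k} :=
    Finset.univ.filter (fun A => Sum.inr A ∈ S) with hTdef
  have hsub : (I.image Sum.inl ∪ T.image Sum.inr : Finset (Vnk n k)) ⊆ S := by
    intro x hx
    rcases Finset.mem_union.1 hx with hx | hx
    · obtain ⟨i, hi, rfl⟩ := Finset.mem_image.1 hx
      exact (Finset.mem_filter.1 hi).2
    · obtain ⟨A, hA, rfl⟩ := Finset.mem_image.1 hx
      exact (Finset.mem_filter.1 hA).2
  have hdisj : Disjoint (I.image Sum.inl) (T.image (Sum.inr : _ → Vnk n k)) := by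
    simp [Finset.disjoint_left]
  have hIT : I.card + T.card ≤ n - 2 := by
    have h1 := Finset.card_le_card hsub
    rw [Finset.card_union_of_disjoint hdisj,
        Finset.card_image_of_injective _ Sum.inl_injective,
        Finset.card_image_of_injective _ Sum.inr_injective] at h1
    omega
  have hm : (Iᶜ : Finset (Fin n)).card = n - I.card := by
    rw [Finset.card_compl, Fintype.card_fin]
  have hIcard : I.card ≤ n - 2 := by omega
  set r : ℕ := min k ((Iᶜ : Finset (Fin n)).card - 1) with hrdef
  have hr1 : 1 ≤ r := by
    have : 2 ≤ (Iᶜ : Finset (Fin n)).card := by omega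
    omega
  have hr2 : r ≤ (Iᶜ : Finset (Fin n)).card - 1 := min_le_right _ _
  have hrk : r ≤ k := min_le_left _ _
  have hjI : k - r ≤ I.card := by omega
  obtain ⟨J, hJI, hJcard⟩ := Finset.exists_subset_card_eq hjI
  set F : Finset (Finset (Fin n)) :=
    (Finset.powersetCard r (Iᶜ : Finset (Fin n))).image (fun K => K ∪ J) with hFdef
  have key : ∀ K ∈ Finset.powersetCard r (Iᶜ : Finset (Fin n)), (K ∪ J) \ I = K := by
    intro K hK
    rw [Finset.mem_powersetCard] at hK
    ext x
    simp only [Finset.mem_sdiff, Finset.mem_union]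
    constructor
    · rintro ⟨hx | hx, hxI⟩
      · exact hx
      · exact absurd (hJI hx) hxI
    · intro hx
      exact ⟨Or.inl hx, Finset.mem_compl.1 (hK.1 hx)⟩
  have hFcard : (Iᶜ : Finset (Fin n)).card ≤ F.card := by
    rw [hFdef, Finset.card_image_of_injOn, Finset.card_powersetCard]
    · exact choose_ge _ r hr1 hr2
    · intro K1 h1 K2 h2 e
      simp only at e
      rw [← key K1 (by simpa using h1), ← key K2 (by simpa using h2), e]
  have hmemF : ∀ A ∈ F, A.card = k ∧ A ∩ I = J := by
    intro A hA
    obtain ⟨K, hK, rfl⟩ := Finset.mem_image.1 hA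
    have hK' := hK
    rw [Finset.mem_powersetCard] at hK'
    have hdisjKJ : Disjoint K J := by
      rw [Finset.disjoint_left]
      exact fun x hxK hxJ => Finset.mem_compl.1 (hK'.1 hxK) (hJI hxJ)
    constructor
    · rw [Finset.card_union_of_disjoint hdisjKJ, hK'.2, hJcard]
      omega
    · ext x
      simp only [Finset.mem_inter, Finset.mem_union]
      constructor
      · rintro ⟨hx | hx, hxI⟩
        · exact absurd hxI (Finset.mem_compl.1 (hK'.1 hx))
        · exact hx
      · intro hx
        exact ⟨Or.inr hx, hJI hx⟩
  set F' : Finset (Finset (Fin n)) := F \ T.image Subtype.val with hF'def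
  have hF'card : 1 < F'.card := by
    have h1 : F.card - (T.image Subtype.val).card ≤ F'.card := Finset.le_card_sdiff _ _
    have h2 : (T.image Subtype.val).card ≤ T.card := Finset.card_image_le
    omega
  obtain ⟨a, haF', b, hbF', hab⟩ := Finset.one_lt_card.1 hF'card
  obtain ⟨haF, haT⟩ := Finset.mem_sdiff.1 haF'
  obtain ⟨hbF, hbT⟩ := Finset.mem_sdiff.1 hbF'
  obtain ⟨ha1, ha2⟩ := hmemF a haF
  obtain ⟨hb1, hb2⟩ := hmemF b hbF
  refine ⟨⟨a, ha1⟩, ⟨b, hb1⟩, fun e => hab (congrArg Subtype.val e), ?_⟩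
  rintro (i | C) hs
  · have hiI : i ∈ I := Finset.mem_filter.2 ⟨Finset.mem_univ _, hs⟩
    by_cases hiJ : i ∈ J
    · have hia : i ∈ a := (Finset.mem_inter.1 (ha2.symm ▸ hiJ : i ∈ a ∩ I)).1
      have hib : i ∈ b := (Finset.mem_inter.1 (hb2.symm ▸ hiJ : i ∈ b ∩ I)).1
      rw [dist_wv_mem n k hk hkn ⟨a, ha1⟩ i hia, dist_wv_mem n k hk hkn ⟨b, hb1⟩ i hib]
    · have hia : i ∉ a := fun h =>
        hiJ (by rw [← ha2]; exact Finset.mem_inter.2 ⟨h, hiI⟩)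
      have hib : i ∉ b := fun h =>
        hiJ (by rw [← hb2]; exact Finset.mem_inter.2 ⟨h, hiI⟩)
      rw [dist_wv_not n k ⟨a, ha1⟩ i hia, dist_wv_not n k ⟨b, hb1⟩ i hib]
  · have hCT : C ∈ T := Finset.mem_filter.2 ⟨Finset.mem_univ _, hs⟩
    have hCv : C.1 ∈ T.image Subtype.val := Finset.mem_image_of_mem _ hCT
    have hnea : (⟨a, ha1⟩ : {A : Finset (Fin n) // A.card = k}) ≠ C := by
      intro e
      exact haT (by rw [show a = C.1 from congrArg Subtype.val e]; exact hCv)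
    have hneb : (⟨b, hb1⟩ : {A : Finset (Fin n) // A.card = k}) ≠ C := by
      intro e
      exact hbT (by rw [show b = C.1 from congrArg Subtype.val e]; exact hCv)
    rw [dist_ww n k _ _ hnea, dist_ww n k _ _ hneb]
end

section
/- For every integer n ≥ 1, all x, x′ ∈ L_n and all y ∈ W_n, the graph distance in G_n satisfies: dist(a_x, b_y) = 1 if x is a prefix of y and dist(a_x, b_y) = 3 otherwise; dist(a_x, c_y) = 2; dist(a_x, d_{x′}) = 3; and for x ≠ x′, dist(a_x, a_{x′}) = 2 if one of x, x′ is a prefix of the other and dist(a_x, a_{x′}) = 4 otherwise. -/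
/-- `L n`: binary words of length at most `n` that are empty or end in `1` (`true`). -/
abbrev Ln (n : ℕ) := {x : List Bool // x.length ≤ n ∧ (x = [] ∨ x.getLast? = some true)}

/-- `W n`: binary words of length exactly `n`. -/
abbrev Wn (n : ℕ) := {y : List Bool // y.length = n}

/-- Vertex set of the graph `G_n`: a copy of `L n` (the `a` vertices), two copies of `W n`
(the `b` and `c` vertices) and another copy of `L n` (the `d` vertices). -/
abbrev VGn (n : ℕ) := Ln n ⊕ Wn n ⊕ Wn n ⊕ Ln n

def va {n : ℕ} (x : Ln n) : VGn n := Sum.inl x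
def vb {n : ℕ} (y : Wn n) : VGn n := Sum.inr (Sum.inl y)
def vc {n : ℕ} (y : Wn n) : VGn n := Sum.inr (Sum.inr (Sum.inl y))
def vd {n : ℕ} (x : Ln n) : VGn n := Sum.inr (Sum.inr (Sum.inr x))

/-- The graph `G_n`: edges `b_y c_z` for all `y, z ∈ W n`, `a_x b_y` whenever `x` is a
prefix of `y`, and `d_x c_y` whenever `x` is a prefix of `y`. -/
def Gn (n : ℕ) : SimpleGraph (VGn n) where
  Adj u v :=
    match u, v with
    | Sum.inl x, Sum.inr (Sum.inl y) => x.1 <+: y.1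
    | Sum.inr (Sum.inl y), Sum.inl x => x.1 <+: y.1
    | Sum.inr (Sum.inl _), Sum.inr (Sum.inr (Sum.inl _)) => True
    | Sum.inr (Sum.inr (Sum.inl _)), Sum.inr (Sum.inl _) => True
    | Sum.inr (Sum.inr (Sum.inl y)), Sum.inr (Sum.inr (Sum.inr x)) => x.1 <+: y.1
    | Sum.inr (Sum.inr (Sum.inr x)), Sum.inr (Sum.inr (Sum.inl y)) => x.1 <+: y.1
    | _, _ => False
  symm := by
    constructor
    rintro (x | y | z | w) (x' | y' | z' | w') h <;> exact h
  loopless := by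
    constructor
    rintro (x | y | z | w) h <;> exact h

-- padW
def padW (n : ℕ) (x : Ln n) : Wn n :=
  ⟨x.1 ++ List.replicate (n - x.1.length) false, by
    have := x.2.1; simp; omega⟩

lemma prefix_padW (n : ℕ) (x : Ln n) : x.1 <+: (padW n x).1 := List.prefix_append _ _

-- adjacency intro
lemma adj_ab {n} {x : Ln n} {y : Wn n} (h : x.1 <+: y.1) : (Gn n).Adj (va x) (vb y) := h
lemma adj_bc {n} (y z : Wn n) : (Gn n).Adj (vb y) (vc z) := trivial
lemma adj_cb {n} (y z : Wn n) : (Gn n).Adj (vc y) (vb z) := trivial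
lemma adj_cd {n} {x : Ln n} {y : Wn n} (h : x.1 <+: y.1) : (Gn n).Adj (vc y) (vd x) := h

-- classification of neighbors of a vertices
lemma adj_of_a {n} {x : Ln n} {u : VGn n} (h : (Gn n).Adj (va x) u) :
    ∃ y : Wn n, u = vb y ∧ x.1 <+: y.1 := by
  obtain x' | y | z | w := u
  · exact (h : False).elim
  · exact ⟨y, rfl, h⟩
  · exact (h : False).elim
  · exact (h : False).elim

lemma not_adj_bb {n} (y z : Wn n) : ¬ (Gn n).Adj (vb y) (vb z) := fun h => (h : False)
lemma not_adj_bd {n} (y : Wn n) (x : Ln n) : ¬ (Gn n).Adj (vb y) (vd x) := fun h => (h : False)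
lemma not_adj_ba {n} {y : Wn n} {x : Ln n} (h : (Gn n).Adj (vb y) (va x)) : x.1 <+: y.1 := h

open SimpleGraph

lemma walk2 {n} {u v : VGn n} (h : (Gn n).dist u v = 2) :
    ∃ w, (Gn n).Adj u w ∧ (Gn n).Adj w v := by
  obtain ⟨p, hp⟩ := exists_walk_of_dist_ne_zero (by omega : (Gn n).dist u v ≠ 0)
  rw [h] at hp
  have h1 := p.adj_getVert_succ (i := 0) (by omega)
  have h2 := p.adj_getVert_succ (i := 1) (by omega)
  have hv : p.getVert 2 = v := by rw [← hp]; exact p.getVert_length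
  rw [p.getVert_zero] at h1
  rw [hv] at h2
  exact ⟨p.getVert 1, h1, h2⟩

lemma walk3 {n} {u v : VGn n} (h : (Gn n).dist u v = 3) :
    ∃ w w', (Gn n).Adj u w ∧ (Gn n).Adj w w' ∧ (Gn n).Adj w' v := by
  obtain ⟨p, hp⟩ := exists_walk_of_dist_ne_zero (by omega : (Gn n).dist u v ≠ 0)
  rw [h] at hp
  have h1 := p.adj_getVert_succ (i := 0) (by omega)
  have h2 := p.adj_getVert_succ (i := 1) (by omega)
  have h3 := p.adj_getVert_succ (i := 2) (by omega)
  have hv : p.getVert 3 = v := by rw [← hp]; exact p.getVert_length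
  rw [p.getVert_zero] at h1
  rw [hv] at h3
  exact ⟨p.getVert 1, p.getVert 2, h1, h2, h3⟩


/-- Distances from `a` vertices in `G_n` (`n ≥ 1`): `dist(a_x, b_y)` is `1` or `3`
according to whether `x` is a prefix of `y`; `dist(a_x, c_y) = 2`; `dist(a_x, d_x') = 3`;
and for `x ≠ x'`, `dist(a_x, a_x')` is `2` or `4` according to whether one of `x, x'`
is a prefix of the other. -/
theorem stmt9 (n : ℕ) (hn : 1 ≤ n) (x x' : Ln n) (y : Wn n) :
    ((x.1 <+: y.1 → (Gn n).dist (va x) (vb y) = 1) ∧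
     (¬ x.1 <+: y.1 → (Gn n).dist (va x) (vb y) = 3)) ∧
    (Gn n).dist (va x) (vc y) = 2 ∧
    (Gn n).dist (va x) (vd x') = 3 ∧
    (x ≠ x' →
      ((x.1 <+: x'.1 ∨ x'.1 <+: x.1) → (Gn n).dist (va x) (va x') = 2) ∧
      (¬ (x.1 <+: x'.1 ∨ x'.1 <+: x.1) → (Gn n).dist (va x) (va x') = 4)) := by
  refine ⟨⟨fun h => dist_eq_one_iff_adj.mpr (adj_ab h), fun h => ?_⟩, ?_, ?_, fun hne => ⟨?_, ?_⟩⟩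
  · -- a to b, no prefix: dist 3
    have hle : (Gn n).dist (va x) (vb y) ≤ 3 := by
      have := (Gn n).dist_le
        (Walk.cons (adj_ab (prefix_padW n x)) (Walk.cons (adj_bc _ y) (Walk.cons (adj_cb y y) Walk.nil)))
      simpa using this
    have h0 : (Gn n).dist (va x) (vb y) ≠ 0 := by
      rw [dist_ne_zero_iff_ne_and_reachable]
      exact ⟨by simp [va, vb], ⟨Walk.cons (adj_ab (prefix_padW n x))
        (Walk.cons (adj_bc _ y) (Walk.cons (adj_cb y y) Walk.nil))⟩⟩
    have h1 : (Gn n).dist (va x) (vb y) ≠ 1 := fun hd => h (dist_eq_one_iff_adj.mp hd)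
    have h2 : (Gn n).dist (va x) (vb y) ≠ 2 := by
      intro hd
      obtain ⟨w, hw1, hw2⟩ := walk2 hd
      obtain ⟨y', rfl, -⟩ := adj_of_a hw1
      exact not_adj_bb y' y hw2
    omega
  · -- a to c : dist 2
    have hle : (Gn n).dist (va x) (vc y) ≤ 2 := by
      have := (Gn n).dist_le (Walk.cons (adj_ab (prefix_padW n x)) (Walk.cons (adj_bc _ y) Walk.nil))
      simpa using this
    have h0 : (Gn n).dist (va x) (vc y) ≠ 0 := by
      rw [dist_ne_zero_iff_ne_and_reachable]
      exact ⟨by simp [va, vc], ⟨Walk.cons (adj_ab (prefix_padW n x)) (Walk.cons (adj_bc _ y) Walk.nil)⟩⟩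
    have h1 : (Gn n).dist (va x) (vc y) ≠ 1 := by
      intro hd
      obtain ⟨y', hy', -⟩ := adj_of_a (dist_eq_one_iff_adj.mp hd)
      simp [vb, vc] at hy'
    omega
  · -- a to d : dist 3
    have hle : (Gn n).dist (va x) (vd x') ≤ 3 := by
      have := (Gn n).dist_le (Walk.cons (adj_ab (prefix_padW n x))
        (Walk.cons (adj_bc _ (padW n x')) (Walk.cons (adj_cd (prefix_padW n x')) Walk.nil)))
      simpa using this
    have h0 : (Gn n).dist (va x) (vd x') ≠ 0 := by
      rw [dist_ne_zero_iff_ne_and_reachable]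
      exact ⟨by simp [va, vd], ⟨Walk.cons (adj_ab (prefix_padW n x))
        (Walk.cons (adj_bc _ (padW n x')) (Walk.cons (adj_cd (prefix_padW n x')) Walk.nil))⟩⟩
    have h1 : (Gn n).dist (va x) (vd x') ≠ 1 := by
      intro hd
      obtain ⟨y', hy', -⟩ := adj_of_a (dist_eq_one_iff_adj.mp hd)
      simp [vb, vd] at hy'
    have h2 : (Gn n).dist (va x) (vd x') ≠ 2 := by
      intro hd
      obtain ⟨w, hw1, hw2⟩ := walk2 hd
      obtain ⟨y', rfl, -⟩ := adj_of_a hw1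
      exact not_adj_bd y' x' hw2
    omega
  · -- a to a, comparable : dist 2
    intro hcmp
    have hb : ∃ z : Wn n, x.1 <+: z.1 ∧ x'.1 <+: z.1 := by
      rcases hcmp with h | h
      · exact ⟨padW n x', h.trans (prefix_padW n x'), prefix_padW n x'⟩
      · exact ⟨padW n x, prefix_padW n x, h.trans (prefix_padW n x)⟩
    obtain ⟨z, hz1, hz2⟩ := hb
    have hle : (Gn n).dist (va x) (va x') ≤ 2 := by
      have := (Gn n).dist_le (Walk.cons (adj_ab hz1) (Walk.cons (adj_ab hz2).symm Walk.nil))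
      simpa using this
    have h0 : (Gn n).dist (va x) (va x') ≠ 0 := by
      rw [dist_ne_zero_iff_ne_and_reachable]
      exact ⟨by simpa [va] using hne, ⟨Walk.cons (adj_ab hz1) (Walk.cons (adj_ab hz2).symm Walk.nil)⟩⟩
    have h1 : (Gn n).dist (va x) (va x') ≠ 1 := by
      intro hd
      obtain ⟨y', hy', -⟩ := adj_of_a (dist_eq_one_iff_adj.mp hd)
      simp [vb, va] at hy'
    omega
  · -- a to a, incomparable : dist 4
    intro hcmp
    have hle : (Gn n).dist (va x) (va x') ≤ 4 := by
      have := (Gn n).dist_le (Walk.cons (adj_ab (prefix_padW n x))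
        (Walk.cons (adj_bc _ (padW n x)) (Walk.cons (adj_cb _ (padW n x'))
          (Walk.cons (adj_ab (prefix_padW n x')).symm Walk.nil))))
      simpa using this
    have h0 : (Gn n).dist (va x) (va x') ≠ 0 := by
      rw [dist_ne_zero_iff_ne_and_reachable]
      exact ⟨by simpa [va] using hne, ⟨Walk.cons (adj_ab (prefix_padW n x))
        (Walk.cons (adj_bc _ (padW n x)) (Walk.cons (adj_cb _ (padW n x'))
          (Walk.cons (adj_ab (prefix_padW n x')).symm Walk.nil)))⟩⟩
    have h1 : (Gn n).dist (va x) (va x') ≠ 1 := by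
      intro hd
      obtain ⟨y', hy', -⟩ := adj_of_a (dist_eq_one_iff_adj.mp hd)
      simp [vb, va] at hy'
    have h2 : (Gn n).dist (va x) (va x') ≠ 2 := by
      intro hd
      obtain ⟨w, hw1, hw2⟩ := walk2 hd
      obtain ⟨y', rfl, hpre⟩ := adj_of_a hw1
      have hpre' : x'.1 <+: y'.1 := not_adj_ba hw2
      exact hcmp (List.prefix_or_prefix_of_prefix hpre hpre')
    have h3 : (Gn n).dist (va x) (va x') ≠ 3 := by
      intro hd
      obtain ⟨w, w', hw1, hw2, hw3⟩ := walk3 hd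
      obtain ⟨y1, rfl, -⟩ := adj_of_a hw1
      obtain ⟨y2, rfl, -⟩ := adj_of_a hw3.symm
      exact not_adj_bb y1 y2 hw2
    omega
end

section
/- For every integer n ≥ 1, every resolving set in G_n for the set B = {b_y : y ∈ W_n} has at least 2^n − 1 elements. -/
namespace Stmt13Aux

open SimpleGraph

variable {n : ℕ}

/-! ### Finiteness -/

instance finWn : Finite (Wn n) := inferInstanceAs (Finite (List.Vector Bool n))

instance fintypeWn : Fintype (Wn n) := inferInstanceAs (Fintype (List.Vector Bool n))

instance finLn : Finite (Ln n) := by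
  apply Finite.of_injective
    (fun x : Ln n => ((⟨x.1.length, by omega⟩ : Fin (n + 1)),
      fun i : Fin n => x.1.getD i false))
  intro x y h
  have h1 : x.1.length = y.1.length := congrArg Fin.val (congrArg Prod.fst h)
  have h2 := congrArg Prod.snd h
  apply Subtype.ext
  apply List.ext_getElem h1
  intro i hi hi'
  have hin : i < n := lt_of_lt_of_le hi x.2.1
  have := congrFun h2 ⟨i, hin⟩
  simpa [List.getD_eq_getElem?_getD, List.getElem?_eq_getElem, hi, hi'] using this

instance : Finite (VGn n) := by infer_instance

lemma card_Wn : Nat.card (Wn n) = 2 ^ n := by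
  rw [Nat.card_eq_fintype_card]
  have : Fintype.card (Wn n) = Fintype.card (List.Vector Bool n) := rfl
  rw [this, card_vector]
  simp

/-! ### The canonical extension of a short word to a word of length `n` -/

def ext0 (x : Ln n) : Wn n :=
  ⟨x.1 ++ List.replicate (n - x.1.length) false, by
    have := x.2.1
    simp [List.length_append]
    omega⟩

lemma ext0_prefix (x : Ln n) : x.1 <+: (ext0 x).1 := List.prefix_append _ _

/-! ### Distances from `b`-vertices -/

lemma dist_eq_two_of {V : Type*} {G : SimpleGraph V} {u v : V} (hne : u ≠ v)
    (hadj : ¬ G.Adj u v) (p : G.Walk u v) (hp : p.length = 2) : G.dist u v = 2 := by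
  have h1 : G.dist u v ≤ 2 := hp ▸ SimpleGraph.dist_le p
  have h2 : G.dist u v ≠ 0 :=
    SimpleGraph.dist_ne_zero_iff_ne_and_reachable.mpr ⟨hne, ⟨p⟩⟩
  have h3 : G.dist u v ≠ 1 := fun h => hadj (SimpleGraph.dist_eq_one_iff_adj.mp h)
  omega

lemma dist_bc (y z : Wn n) : (Gn n).dist (vb y) (vc z) = 1 :=
  SimpleGraph.dist_eq_one_iff_adj.mpr trivial

lemma dist_bb {y z : Wn n} (h : y ≠ z) : (Gn n).dist (vb y) (vb z) = 2 := by
  have w1 : (Gn n).Adj (vb y) (vc y) := trivial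
  have w2 : (Gn n).Adj (vc y) (vb z) := trivial
  refine dist_eq_two_of ?_ (fun h => h)
    (SimpleGraph.Walk.cons w1 (SimpleGraph.Walk.cons w2 SimpleGraph.Walk.nil)) rfl
  simp only [vb, ne_eq, Sum.inr.injEq, Sum.inl.injEq]
  exact fun hyz => h hyz

lemma dist_bd (y : Wn n) (x : Ln n) : (Gn n).dist (vb y) (vd x) = 2 := by
  have w1 : (Gn n).Adj (vb y) (vc (ext0 x)) := trivial
  have w2 : (Gn n).Adj (vc (ext0 x)) (vd x) := ext0_prefix x
  refine dist_eq_two_of ?_ (fun h => h)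
    (SimpleGraph.Walk.cons w1 (SimpleGraph.Walk.cons w2 SimpleGraph.Walk.nil)) rfl
  simp [vb, vd]

lemma dist_ba_pre {y : Wn n} {x : Ln n} (h : x.1 <+: y.1) :
    (Gn n).dist (vb y) (va x) = 1 :=
  SimpleGraph.dist_eq_one_iff_adj.mpr h

lemma no_walk_two (y : Wn n) (x : Ln n) (p : (Gn n).Walk (vb y) (va x)) :
    p.length ≠ 2 := by
  cases p with
  | @cons _ m _ h q =>
    cases q with
    | nil => simp
    | @cons _ m' _ h' q' =>
      intro hl
      simp only [SimpleGraph.Walk.length_cons] at hl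
      have hq' : q'.length = 0 := by omega
      have hm' : m' = va x := q'.eq_of_length_eq_zero hq'
      subst hm'
      rcases m with x'' | z | w | x'' <;> first | exact h | exact h'

lemma dist_ba_not {y : Wn n} {x : Ln n} (h : ¬ x.1 <+: y.1) :
    (Gn n).dist (vb y) (va x) = 3 := by
  have w1 : (Gn n).Adj (vb y) (vc (ext0 x)) := trivial
  have w2 : (Gn n).Adj (vc (ext0 x)) (vb (ext0 x)) := trivial
  have w3 : (Gn n).Adj (vb (ext0 x)) (va x) := ext0_prefix x
  have p : (Gn n).Walk (vb y) (va x) :=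
    SimpleGraph.Walk.cons w1 (SimpleGraph.Walk.cons w2
      (SimpleGraph.Walk.cons w3 SimpleGraph.Walk.nil))
  have h1 : (Gn n).dist (vb y) (va x) ≤ 3 := by
    have := SimpleGraph.dist_le (SimpleGraph.Walk.cons w1 (SimpleGraph.Walk.cons w2
      (SimpleGraph.Walk.cons w3 SimpleGraph.Walk.nil)))
    simp only [SimpleGraph.Walk.length_cons, SimpleGraph.Walk.length_nil] at this
    omega
  have h2 : (Gn n).dist (vb y) (va x) ≠ 0 := by
    refine SimpleGraph.dist_ne_zero_iff_ne_and_reachable.mpr ⟨?_, ⟨p⟩⟩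
    simp [vb, va]
  have h3 : (Gn n).dist (vb y) (va x) ≠ 1 :=
    fun hd => h (SimpleGraph.dist_eq_one_iff_adj.mp hd)
  have h4 : (Gn n).dist (vb y) (va x) ≠ 2 := by
    intro hd
    obtain ⟨q, hq⟩ := SimpleGraph.exists_walk_of_dist_ne_zero h2
    exact no_walk_two y x q (hq.trans hd)
  omega

/-! ### What a vertex can distinguish -/

lemma key {y z : Wn n} (hyz : y ≠ z) (s : VGn n)
    (hd : (Gn n).dist (vb y) s ≠ (Gn n).dist (vb z) s) :
    s = vb y ∨ s = vb z ∨
      ∃ x : Ln n, s = va x ∧ (x.1 <+: y.1 ↔ ¬ x.1 <+: z.1) := by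
  rcases s with x | w | w | x
  · -- a-vertex
    refine Or.inr (Or.inr ⟨x, rfl, ?_⟩)
    by_cases h1 : x.1 <+: y.1 <;> by_cases h2 : x.1 <+: z.1
    · exact absurd ((dist_ba_pre h1).trans (dist_ba_pre h2).symm) hd
    · simp [h1, h2]
    · simp [h1, h2]
    · exact absurd ((dist_ba_not h1).trans (dist_ba_not h2).symm) hd
  · -- b-vertex
    by_cases h1 : w = y
    · exact Or.inl (by rw [h1]; rfl)
    by_cases h2 : w = z
    · exact Or.inr (Or.inl (by rw [h2]; rfl))
    · exact absurd ((dist_bb (fun h => h1 h.symm)).trans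
        (dist_bb (fun h => h2 h.symm)).symm) hd
  · -- c-vertex
    exact absurd ((dist_bc y w).trans (dist_bc z w).symm) hd
  · -- d-vertex
    exact absurd ((dist_bd y x).trans (dist_bd z x).symm) hd

/-! ### The associated set family -/

def fset : VGn n → Set (Wn n)
  | Sum.inl x => {y : Wn n | x.1 <+: y.1}
  | Sum.inr (Sum.inl y) => {y}
  | _ => ∅

lemma fset_laminar (s t : VGn n) :
    fset s ⊆ fset t ∨ fset t ⊆ fset s ∨ Disjoint (fset s) (fset t) := by
  have empty_case : ∀ (A : Set (Wn n)), (∅ : Set (Wn n)) ⊆ A := fun A => Set.empty_subset A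
  rcases s with x | y | w | x' <;> rcases t with x2 | y2 | w2 | x2'
  case inl.inl =>
    by_cases h1 : x.1 <+: x2.1
    · exact Or.inr (Or.inl (fun w hw => h1.trans hw))
    by_cases h2 : x2.1 <+: x.1
    · exact Or.inl (fun w hw => h2.trans hw)
    · refine Or.inr (Or.inr (Set.disjoint_left.mpr ?_))
      intro w hw hw2
      rcases List.prefix_or_prefix_of_prefix hw hw2 with h | h
      · exact h1 h
      · exact h2 h
  case inl.inr.inl =>
    by_cases h1 : x.1 <+: y2.1
    · exact Or.inr (Or.inl (fun w hw => by
        simp only [fset, Set.mem_singleton_iff] at hw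
        subst hw; exact h1))
    · refine Or.inr (Or.inr (Set.disjoint_left.mpr ?_))
      intro w hw hw2
      simp only [fset, Set.mem_singleton_iff] at hw2
      subst hw2; exact h1 hw
  case inr.inl.inl =>
    by_cases h1 : x2.1 <+: y.1
    · exact Or.inl (fun w hw => by
        simp only [fset, Set.mem_singleton_iff] at hw
        subst hw; exact h1)
    · refine Or.inr (Or.inr (Set.disjoint_left.mpr ?_))
      intro w hw hw2
      simp only [fset, Set.mem_singleton_iff] at hw
      subst hw; exact h1 hw2
  case inr.inl.inr.inl =>
    by_cases h : y = y2
    · subst h; exact Or.inl subset_rfl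
    · refine Or.inr (Or.inr (Set.disjoint_left.mpr ?_))
      intro w hw hw2
      simp only [fset, Set.mem_singleton_iff] at hw hw2
      exact h (hw ▸ hw2 ▸ rfl)
  all_goals first
    | exact Or.inl (empty_case _)
    | exact Or.inr (Or.inl (empty_case _))

/-! ### The laminar family bound -/

lemma laminar_bound {α : Type*} :
    ∀ (m : ℕ) (F : Set (Set α)), F.Finite → F.ncard = m →
    (∀ A ∈ F, ∀ B ∈ F, A ⊆ B ∨ B ⊆ A ∨ Disjoint A B) →
    ∀ (P : Set α), P.Finite →
    (∀ u ∈ P, ∀ v ∈ P, u ≠ v → ∃ A ∈ F, (u ∈ A ↔ v ∉ A)) →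
    P.ncard ≤ m + 1 := by
  intro m
  induction' m using Nat.strong_induction_on with m IH
  intro F hF hcard lam P hP sep
  rcases Set.eq_empty_or_nonempty F with hFe | hFne
  · -- no sets: P is a subsingleton
    subst hFe
    rcases Set.eq_empty_or_nonempty P with hPe | ⟨u, hu⟩
    · simp [hPe]
    · have hsub : P ⊆ {u} := by
        intro v hv
        by_contra hvu
        obtain ⟨A, hA, -⟩ := sep u hu v hv (fun h => hvu (h ▸ rfl))
        exact hA
      calc P.ncard ≤ ({u} : Set α).ncard := Set.ncard_le_ncard hsub (Set.finite_singleton u)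
        _ = 1 := Set.ncard_singleton u
        _ ≤ m + 1 := by omega
  · obtain ⟨A, hA, hmax⟩ := Set.Finite.exists_maximalFor id F hF hFne
    set F₁ : Set (Set α) := {B ∈ F | B ≠ A ∧ B ⊆ A} with hF₁def
    set F₂ : Set (Set α) := (F \ {A}) \ F₁ with hF₂def
    have hF₁sub : F₁ ⊆ F \ {A} := fun B hB => ⟨hB.1, hB.2.1⟩
    have hF₁fin : F₁.Finite := hF.subset (fun B hB => hB.1)
    have hF₂fin : F₂.Finite := hF.subset (fun B hB => hB.1.1)
    have hdisj : Disjoint F₁ F₂ := Set.disjoint_left.mpr (fun B hB h2 => h2.2 hB)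
    have hunion : F₁ ∪ F₂ = F \ {A} := by
      apply Set.Subset.antisymm
      · rintro B (hB | hB)
        · exact hF₁sub hB
        · exact hB.1
      · intro B hB
        by_cases h : B ∈ F₁
        · exact Or.inl h
        · exact Or.inr ⟨hB, h⟩
    have hm : 1 ≤ m := by
      have : 0 < F.ncard := (Set.ncard_pos hF).mpr hFne
      omega
    have hsum : F₁.ncard + F₂.ncard = m - 1 := by
      have h1 : (F₁ ∪ F₂).ncard = F₁.ncard + F₂.ncard :=
        Set.ncard_union_eq hdisj hF₁fin hF₂fin
      have h2 : (F \ {A}).ncard = F.ncard - 1 :=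
        Set.ncard_diff_singleton_of_mem hA
      rw [hunion] at h1
      omega
    have hlt₁ : F₁.ncard < m := by
      have := Set.ncard_le_ncard hF₁sub (hF.subset (Set.diff_subset))
      have h2 : (F \ {A}).ncard = F.ncard - 1 :=
        Set.ncard_diff_singleton_of_mem hA
      omega
    have hlt₂ : F₂.ncard < m := by
      have := Set.ncard_le_ncard (show F₂ ⊆ F \ {A} from fun B hB => hB.1)
        (hF.subset (Set.diff_subset))
      have h2 : (F \ {A}).ncard = F.ncard - 1 :=
        Set.ncard_diff_singleton_of_mem hA
      omega
    -- separation inside A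
    have sep₁ : ∀ u ∈ P ∩ A, ∀ v ∈ P ∩ A, u ≠ v → ∃ B ∈ F₁, (u ∈ B ↔ v ∉ B) := by
      rintro u ⟨huP, huA⟩ v ⟨hvP, hvA⟩ huv
      obtain ⟨B, hB, hBsep⟩ := sep u huP v hvP huv
      have hBA : B ≠ A := by
        rintro rfl
        exact (hBsep.mp huA) hvA
      have hnd : ¬ Disjoint B A := by
        intro hd
        by_cases hu : u ∈ B
        · exact (hd.ne_of_mem hu huA) rfl
        · have hv : v ∈ B := by
            by_contra hv
            exact hv (by tauto)
          exact (hd.ne_of_mem hv hvA) rfl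
      rcases lam B hB A hA with h | h | h
      · exact ⟨B, ⟨hB, hBA, h⟩, hBsep⟩
      · exact absurd (Set.Subset.antisymm h (hmax hB h)).symm hBA
      · exact absurd h hnd
    have sep₂ : ∀ u ∈ P \ A, ∀ v ∈ P \ A, u ≠ v → ∃ B ∈ F₂, (u ∈ B ↔ v ∉ B) := by
      rintro u ⟨huP, huA⟩ v ⟨hvP, hvA⟩ huv
      obtain ⟨B, hB, hBsep⟩ := sep u huP v hvP huv
      have hBA : B ≠ A := by
        rintro rfl
        exact huA (hBsep.mpr hvA)
      have hBF₁ : B ∉ F₁ := by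
        rintro ⟨-, -, hBsub⟩
        have hu : u ∉ B := fun h => huA (hBsub h)
        have hv : v ∉ B := fun h => hvA (hBsub h)
        exact hu (hBsep.mpr hv)
      exact ⟨B, ⟨⟨hB, hBA⟩, hBF₁⟩, hBsep⟩
    have ih₁ := IH F₁.ncard hlt₁ F₁ hF₁fin rfl
      (fun B hB C hC => lam B hB.1 C hC.1) (P ∩ A) (hP.subset Set.inter_subset_left) sep₁
    have ih₂ := IH F₂.ncard hlt₂ F₂ hF₂fin rfl
      (fun B hB C hC => lam B hB.1.1 C hC.1.1) (P \ A) (hP.subset Set.diff_subset) sep₂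
    have hsplit : (P ∩ A).ncard + (P \ A).ncard = P.ncard :=
      Set.ncard_inter_add_ncard_diff_eq_ncard P A hP
    omega

end Stmt13Aux

open Stmt13Aux in
/-- For `n ≥ 1`, every resolving set in `G_n` for `B = {b_y : y ∈ W_n}` has at least
`2 ^ n - 1` elements. -/
theorem stmt13 (n : ℕ) (hn : 1 ≤ n) (S : Set (VGn n))
    (hS : ∀ y z : Wn n, y ≠ z → ∃ s ∈ S, (Gn n).dist (vb y) s ≠ (Gn n).dist (vb z) s) :
    2 ^ n - 1 ≤ S.ncard := by
  have hSfin : S.Finite := Set.toFinite S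
  set F : Set (Set (Wn n)) := fset '' S with hFdef
  have hFfin : F.Finite := hSfin.image _
  have lam : ∀ A ∈ F, ∀ B ∈ F, A ⊆ B ∨ B ⊆ A ∨ Disjoint A B := by
    rintro A ⟨s, -, rfl⟩ B ⟨t, -, rfl⟩
    exact fset_laminar s t
  have sep : ∀ u ∈ (Set.univ : Set (Wn n)), ∀ v ∈ (Set.univ : Set (Wn n)), u ≠ v →
      ∃ A ∈ F, (u ∈ A ↔ v ∉ A) := by
    rintro u - v - huv
    obtain ⟨s, hsS, hsd⟩ := hS u v huv
    refine ⟨fset s, ⟨s, hsS, rfl⟩, ?_⟩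
    rcases key huv s hsd with rfl | rfl | ⟨x, rfl, hx⟩
    · simp only [fset, Set.mem_singleton_iff]
      exact ⟨fun _ h => huv h.symm, fun _ => rfl⟩
    · simp only [fset, Set.mem_singleton_iff]
      constructor
      · intro h; exact absurd h huv
      · intro h; exact absurd rfl h
    · simpa only [va, fset, Set.mem_setOf_eq] using hx
  have hbound := laminar_bound F.ncard F hFfin rfl lam Set.univ (Set.finite_univ) sep
  have huniv : (Set.univ : Set (Wn n)).ncard = 2 ^ n := by
    rw [Set.ncard_univ]; exact card_Wn
  have hFle : F.ncard ≤ S.ncard := Set.ncard_image_le hSfin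
  omega
end

section
/- For every integer n ≥ 1, let P = {a_x : x ∈ L_n, |x| < n} ∪ {d_x : x ∈ L_n, |x| < n}. If u and u′ are distinct vertices of G_n with dist(u, p) = dist(u′, p) for every p ∈ P, then there exists a binary word z of length n−1 such that either {u, u′} = {b_{z0}, b_{z1}} or {u, u′} = {c_{z0}, c_{z1}}, where z0 and z1 denote z followed by the bit 0 or 1 respectively. -/
namespace Stmt14Aux

open SimpleGraph List

section general
variable {V : Type*} {G : SimpleGraph V} {u v : V}

lemma dist_eq_two_aux (hne : u ≠ v) (hnadj : ¬ G.Adj u v) {w : V}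
    (h1 : G.Adj u w) (h2 : G.Adj w v) : G.dist u v = 2 := by
  have hle : G.dist u v ≤ 2 :=
    SimpleGraph.dist_le (SimpleGraph.Walk.cons h1 (SimpleGraph.Walk.cons h2 SimpleGraph.Walk.nil))
  have h0 : G.dist u v ≠ 0 := by
    rw [SimpleGraph.dist_ne_zero_iff_ne_and_reachable]
    exact ⟨hne, ⟨SimpleGraph.Walk.cons h1 (SimpleGraph.Walk.cons h2 SimpleGraph.Walk.nil)⟩⟩
  have h1' : G.dist u v ≠ 1 := fun hh => hnadj (SimpleGraph.dist_eq_one_iff_adj.mp hh)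
  omega

lemma exists_mid_of_dist_two (h : G.dist u v = 2) : ∃ w, G.Adj u w ∧ G.Adj w v := by
  obtain ⟨p, hp⟩ := SimpleGraph.exists_walk_of_dist_ne_zero (G := G) (u := u) (v := v)
    (by rw [h]; omega)
  rw [h] at hp
  refine ⟨p.getVert 1, ?_, ?_⟩
  · have := p.adj_getVert_succ (i := 0) (by omega)
    simpa [SimpleGraph.Walk.getVert_zero] using this
  · have h2 := p.adj_getVert_succ (i := 1) (by omega)
    have h3 := p.getVert_length
    rw [hp] at h3
    rwa [h3] at h2

lemma dist_ne_two_aux (hmid : ∀ w, ¬(G.Adj u w ∧ G.Adj w v)) : G.dist u v ≠ 2 := by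
  intro h
  obtain ⟨w, h1, h2⟩ := exists_mid_of_dist_two h
  exact hmid w ⟨h1, h2⟩

lemma dist_eq_three_aux (hne : u ≠ v) (hnadj : ¬ G.Adj u v)
    (hmid : ∀ w, ¬(G.Adj u w ∧ G.Adj w v)) {w1 w2 : V}
    (h1 : G.Adj u w1) (h2 : G.Adj w1 w2) (h3 : G.Adj w2 v) : G.dist u v = 3 := by
  have hle : G.dist u v ≤ 3 :=
    SimpleGraph.dist_le (SimpleGraph.Walk.cons h1 (SimpleGraph.Walk.cons h2
      (SimpleGraph.Walk.cons h3 SimpleGraph.Walk.nil)))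
  have h0 : G.dist u v ≠ 0 := by
    rw [SimpleGraph.dist_ne_zero_iff_ne_and_reachable]
    exact ⟨hne, ⟨SimpleGraph.Walk.cons h1 (SimpleGraph.Walk.cons h2
      (SimpleGraph.Walk.cons h3 SimpleGraph.Walk.nil))⟩⟩
  have h1' : G.dist u v ≠ 1 := fun hh => hnadj (SimpleGraph.dist_eq_one_iff_adj.mp hh)
  have h2' := dist_ne_two_aux hmid
  omega

end general

lemma take_concat (l : List Bool) (k : ℕ) (hk : k < l.length) :
    l.take (k + 1) = l.take k ++ [l[k]] := by
  rw [List.take_succ, List.getElem?_eq_getElem hk]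
  rfl

lemma key_take (n : ℕ) {y y' : List Bool} (hy : y.length = n) (hy' : y'.length = n)
    (H : ∀ x : List Bool, x.length < n → x.getLast? = some true → (x <+: y ↔ x <+: y')) :
    ∀ k, k < n → y.take k = y'.take k := by
  intro k
  induction k with
  | zero => simp
  | succ k ih =>
    intro hk
    have htk := ih (by omega)
    have hky : k < y.length := by omega
    have hky' : k < y'.length := by omega
    rw [take_concat y k hky, take_concat y' k hky', htk]
    cases hb : y[k] <;> cases hb' : y'[k]
    · rfl
    · -- y[k] = false, y'[k] = true : use x = y'.take (k+1)
      exfalso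
      have hxp : y'.take (k + 1) <+: y' := List.take_prefix _ _
      have hxl : (y'.take (k + 1)).length = k + 1 := by
        simp [List.length_take]; omega
      have hxlast : (y'.take (k + 1)).getLast? = some true := by
        rw [take_concat y' k hky', hb']
        exact List.getLast?_concat
      have hxy : y'.take (k + 1) <+: y := (H _ (by omega) hxlast).mpr hxp
      have heq : y'.take (k + 1) = y.take (k + 1) := by
        have := List.prefix_iff_eq_take.mp hxy
        rwa [hxl] at this
      rw [take_concat y' k hky', take_concat y k hky, hb', hb, ← htk] at heq
      have := List.append_cancel_left heq
      simp at this
    · -- y[k] = true, y'[k] = false : use x = y.take (k+1)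
      exfalso
      have hxp : y.take (k + 1) <+: y := List.take_prefix _ _
      have hxl : (y.take (k + 1)).length = k + 1 := by
        simp [List.length_take]; omega
      have hxlast : (y.take (k + 1)).getLast? = some true := by
        rw [take_concat y k hky, hb]
        exact List.getLast?_concat
      have hxy : y.take (k + 1) <+: y' := (H _ (by omega) hxlast).mp hxp
      have heq : y.take (k + 1) = y'.take (k + 1) := by
        have := List.prefix_iff_eq_take.mp hxy
        rwa [hxl] at this
      rw [take_concat y k hky, take_concat y' k hky', hb', hb, htk] at heq
      have := List.append_cancel_left heq
      simp at this
    · rfl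

lemma split_last (n : ℕ) (hn : 1 ≤ n) (l : List Bool) (hl : l.length = n) :
    ∃ b : Bool, l = l.take (n - 1) ++ [b] ∧ l.getLast? = some b := by
  have h1 : n - 1 < l.length := by omega
  have h2 := take_concat l (n - 1) h1
  have h3 : l.take n = l := by rw [← hl]; exact List.take_length
  have h4 : n - 1 + 1 = n := by omega
  rw [h4] at h2
  refine ⟨l[n - 1], by rw [← h2, h3], ?_⟩
  conv_lhs => rw [← h3, ← h4, take_concat l (n - 1) h1]
  exact List.getLast?_concat

end Stmt14Aux
namespace Stmt14Aux

open SimpleGraph List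

variable {n : ℕ}

/-- The empty word as an element of `Ln n`. -/
def eL (n : ℕ) : Ln n := ⟨[], by simp⟩

/-- Extend a word of `Ln n` to a word of length exactly `n`. -/
def extW (x : Ln n) : Wn n :=
  ⟨x.1 ++ List.replicate (n - x.1.length) false, by
    have := x.2.1; simp; omega⟩

lemma extW_prefix (x : Ln n) : x.1 <+: (extW x).1 := List.prefix_append _ _

lemma ne_ab (x : Ln n) (y : Wn n) : va x ≠ vb y := by simp [va, vb]
lemma ne_ac (x : Ln n) (y : Wn n) : va x ≠ vc y := by simp [va, vc]
lemma ne_ad (x x' : Ln n) : va x ≠ vd x' := by simp [va, vd]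
lemma ne_bc (y z : Wn n) : vb y ≠ vc z := by simp [vb, vc]
lemma ne_bd (y : Wn n) (x : Ln n) : vb y ≠ vd x := by simp [vb, vd]
lemma ne_cd (y : Wn n) (x : Ln n) : vc y ≠ vd x := by simp [vc, vd]

lemma ne_aa {x x' : Ln n} (h : x ≠ x') : va x ≠ va x' := by
  simp only [va, ne_eq, Sum.inl.injEq]; exact h

lemma ne_dd {x x' : Ln n} (h : x ≠ x') : vd x ≠ vd x' := by
  simp only [vd, ne_eq, Sum.inr.injEq, Sum.inr.injEq]; exact h

-- Adjacency facts (definitional)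
lemma adj_ab {x : Ln n} {y : Wn n} (hp : x.1 <+: y.1) : (Gn n).Adj (va x) (vb y) := hp
lemma adj_ba {x : Ln n} {y : Wn n} (hp : x.1 <+: y.1) : (Gn n).Adj (vb y) (va x) := hp
lemma adj_bc (y z : Wn n) : (Gn n).Adj (vb y) (vc z) := trivial
lemma adj_cb (y z : Wn n) : (Gn n).Adj (vc y) (vb z) := trivial
lemma adj_cd {y : Wn n} {x : Ln n} (hp : x.1 <+: y.1) : (Gn n).Adj (vc y) (vd x) := hp
lemma adj_dc {y : Wn n} {x : Ln n} (hp : x.1 <+: y.1) : (Gn n).Adj (vd x) (vc y) := hp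

-- Distance lemmas
lemma dist_ab {x : Ln n} {y : Wn n} (hp : x.1 <+: y.1) : (Gn n).dist (va x) (vb y) = 1 :=
  SimpleGraph.dist_eq_one_iff_adj.mpr (adj_ab hp)

lemma dist_ab' {x : Ln n} {y : Wn n} (hp : ¬ x.1 <+: y.1) : (Gn n).dist (va x) (vb y) = 3 := by
  refine dist_eq_three_aux (ne_ab x y) (fun h => hp h) ?_
    (adj_ab (extW_prefix x)) (adj_bc (extW x) y) (adj_cb y y)
  rintro (x'' | y'' | z'' | w'') ⟨h1, h2⟩
  · exact h1
  · exact h2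
  · exact h1
  · exact h1

lemma dist_ad (x x' : Ln n) : (Gn n).dist (va x) (vd x') = 3 := by
  refine dist_eq_three_aux (ne_ad x x') (fun h => h) ?_
    (adj_ab (extW_prefix x)) (adj_bc (extW x) (extW x')) (adj_cd (extW_prefix x'))
  rintro (x'' | y'' | z'' | w'') ⟨h1, h2⟩
  · exact h1
  · exact h2
  · exact h1
  · exact h1

lemma dist_bd (y : Wn n) (x : Ln n) : (Gn n).dist (vb y) (vd x) = 2 :=
  dist_eq_two_aux (ne_bd y x) (fun h => h) (adj_bc y (extW x)) (adj_cd (extW_prefix x))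

lemma dist_ac (x : Ln n) (z : Wn n) : (Gn n).dist (va x) (vc z) = 2 :=
  dist_eq_two_aux (ne_ac x z) (fun h => h) (adj_ab (extW_prefix x)) (adj_bc (extW x) z)

lemma dist_cd {y : Wn n} {x : Ln n} (hp : x.1 <+: y.1) : (Gn n).dist (vc y) (vd x) = 1 :=
  SimpleGraph.dist_eq_one_iff_adj.mpr (adj_cd hp)

lemma dist_cd' {y : Wn n} {x : Ln n} (hp : ¬ x.1 <+: y.1) : (Gn n).dist (vc y) (vd x) = 3 := by
  refine dist_eq_three_aux (ne_cd y x) (fun h => hp h) ?_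
    (adj_cb y y) (adj_bc y (extW x)) (adj_cd (extW_prefix x))
  rintro (x'' | y'' | z'' | w'') ⟨h1, h2⟩
  · exact h1
  · exact h2
  · exact h1
  · exact h2

lemma dist_aa {x x' : Ln n} (hne : x ≠ x') (hp : x.1 <+: x'.1) :
    (Gn n).dist (va x) (va x') = 2 :=
  dist_eq_two_aux (ne_aa hne) (fun h => h)
    (adj_ab (hp.trans (extW_prefix x'))) (adj_ba (extW_prefix x'))

lemma dist_dd {x x' : Ln n} (hne : x ≠ x') (hp : x.1 <+: x'.1) :
    (Gn n).dist (vd x) (vd x') = 2 :=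
  dist_eq_two_aux (ne_dd hne) (fun h => h)
    (adj_dc (y := extW x') (hp.trans (extW_prefix x'))) (adj_cd (extW_prefix x'))

lemma dist_aa_ne_two {x x' : Ln n} (h1 : ¬ x.1 <+: x'.1) (h2 : ¬ x'.1 <+: x.1) :
    (Gn n).dist (va x) (va x') ≠ 2 := by
  apply dist_ne_two_aux
  rintro (x'' | y'' | z'' | w'') ⟨ha, hb⟩
  · exact ha
  · rcases List.prefix_or_prefix_of_prefix (ha : x.1 <+: y''.1) (hb : x'.1 <+: y''.1) with hc | hc
    · exact h1 hc
    · exact h2 hc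
  · exact ha
  · exact ha

lemma dist_dd_ne_two {x x' : Ln n} (h1 : ¬ x.1 <+: x'.1) (h2 : ¬ x'.1 <+: x.1) :
    (Gn n).dist (vd x) (vd x') ≠ 2 := by
  apply dist_ne_two_aux
  rintro (x'' | y'' | z'' | w'') ⟨ha, hb⟩
  · exact ha
  · exact ha
  · rcases List.prefix_or_prefix_of_prefix (ha : x.1 <+: z''.1) (hb : x'.1 <+: z''.1) with hc | hc
    · exact h1 hc
    · exact h2 hc
  · exact ha

lemma reach_aa (x x' : Ln n) : (Gn n).Reachable (va x) (va x') :=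
  ⟨SimpleGraph.Walk.cons (adj_ab (extW_prefix x))
    (SimpleGraph.Walk.cons (adj_bc (extW x) (extW x))
      (SimpleGraph.Walk.cons (adj_cb (extW x) (extW x'))
        (SimpleGraph.Walk.cons (adj_ba (extW_prefix x')) SimpleGraph.Walk.nil)))⟩

lemma reach_dd (x x' : Ln n) : (Gn n).Reachable (vd x) (vd x') :=
  ⟨SimpleGraph.Walk.cons (adj_dc (extW_prefix x))
    (SimpleGraph.Walk.cons (adj_cb (extW x) (extW x))
      (SimpleGraph.Walk.cons (adj_bc (extW x) (extW x'))
        (SimpleGraph.Walk.cons (adj_cd (extW_prefix x')) SimpleGraph.Walk.nil)))⟩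

-- distances to a_[] and d_[]
lemma distAe_le (x : Ln n) : (Gn n).dist (va x) (va (eL n)) ≤ 2 := by
  have := SimpleGraph.dist_le (SimpleGraph.Walk.cons (adj_ab (extW_prefix x))
    (SimpleGraph.Walk.cons (adj_ba (x := eL n) (y := extW x) List.nil_prefix)
      SimpleGraph.Walk.nil))
  simpa using this

lemma distDe_le (x : Ln n) : (Gn n).dist (vd x) (vd (eL n)) ≤ 2 := by
  have := SimpleGraph.dist_le (SimpleGraph.Walk.cons (adj_dc (extW_prefix x))
    (SimpleGraph.Walk.cons (adj_cd (y := extW x) (x := eL n) List.nil_prefix)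
      SimpleGraph.Walk.nil))
  simpa using this

lemma distB_Ae (y : Wn n) : (Gn n).dist (vb y) (va (eL n)) = 1 := by
  rw [SimpleGraph.dist_comm]; exact dist_ab List.nil_prefix

lemma distB_De (y : Wn n) : (Gn n).dist (vb y) (vd (eL n)) = 2 := dist_bd y (eL n)

lemma distC_Ae (z : Wn n) : (Gn n).dist (vc z) (va (eL n)) = 2 := by
  rw [SimpleGraph.dist_comm]; exact dist_ac (eL n) z

lemma distC_De (z : Wn n) : (Gn n).dist (vc z) (vd (eL n)) = 1 :=
  dist_cd List.nil_prefix

lemma distA_De (x : Ln n) : (Gn n).dist (va x) (vd (eL n)) = 3 := dist_ad x (eL n)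

lemma distD_Ae (x : Ln n) : (Gn n).dist (vd x) (va (eL n)) = 3 := by
  rw [SimpleGraph.dist_comm]; exact dist_ad (eL n) x

end Stmt14Aux
namespace Stmt14Aux

lemma pair_words (n : ℕ) (hn : 1 ≤ n) {w w' : List Bool} (hw : w.length = n)
    (hw' : w'.length = n) (hne : w ≠ w')
    (H : ∀ x : List Bool, x.length < n → x.getLast? = some true → (x <+: w ↔ x <+: w')) :
    ∃ z : List Bool, z.length = n - 1 ∧
      ((w = z ++ [false] ∧ w' = z ++ [true]) ∨ (w = z ++ [true] ∧ w' = z ++ [false])) := by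
  have htake := key_take n hw hw' H (n - 1) (by omega)
  obtain ⟨b, hb1, hb2⟩ := split_last n hn w hw
  obtain ⟨b', hb1', hb2'⟩ := split_last n hn w' hw'
  have hzlen : (w.take (n - 1)).length = n - 1 := by
    simp [List.length_take]; omega
  refine ⟨w.take (n - 1), hzlen, ?_⟩
  have hbb : b ≠ b' := by
    intro hEq
    apply hne
    rw [hb1, hb1', htake, hEq]
  cases b <;> cases b'
  · simp at hbb
  · exact Or.inl ⟨hb1, by rw [hb1', ← htake]⟩
  · exact Or.inr ⟨hb1, by rw [hb1', ← htake]⟩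
  · simp at hbb

lemma eq_of_profile (n : ℕ) (hn : 1 ≤ n) {w w' : List Bool} (hw : w.length = n)
    (hw' : w'.length = n)
    (H : ∀ x : List Bool, x.length < n → x.getLast? = some true → (x <+: w ↔ x <+: w'))
    (hl : w.getLast? = some true) (hl' : w'.getLast? = some true) : w = w' := by
  have htake := key_take n hw hw' H (n - 1) (by omega)
  obtain ⟨b, hb1, hb2⟩ := split_last n hn w hw
  obtain ⟨b', hb1', hb2'⟩ := split_last n hn w' hw'
  rw [hb2] at hl
  rw [hb2'] at hl'
  have hbt : b = true := by simpa using hl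
  have hbt' : b' = true := by simpa using hl'
  rw [hb1, hb1', htake, hbt, hbt']

end Stmt14Aux
open Stmt14Aux in
/-- For `n ≥ 1`, let `P = {a_x : |x| < n} ∪ {d_x : |x| < n}`. If distinct vertices
`u ≠ u'` of `G_n` have equal distances to every vertex of `P`, then there is a word `z`
of length `n - 1` such that `{u, u'} = {b_{z0}, b_{z1}}` or `{u, u'} = {c_{z0}, c_{z1}}`. -/
theorem stmt14 (n : ℕ) (hn : 1 ≤ n) (u u' : VGn n) (hne : u ≠ u')
    (h : ∀ x : Ln n, x.1.length < n →
      (Gn n).dist u (va x) = (Gn n).dist u' (va x) ∧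
      (Gn n).dist u (vd x) = (Gn n).dist u' (vd x)) :
    ∃ (z : List Bool) (y0 y1 : Wn n), z.length = n - 1 ∧
      y0.1 = z ++ [false] ∧ y1.1 = z ++ [true] ∧
      (({u, u'} : Set (VGn n)) = {vb y0, vb y1} ∨
       ({u, u'} : Set (VGn n)) = {vc y0, vc y1}) := by
  have heLt : (eL n).1.length < n := by simp [eL]; omega
  rcases u with x1 | y1 | z1 | w1 <;> rcases u' with x2 | y2 | z2 | w2
  -- a a
  · exfalso
    have hx12 : x1 ≠ x2 := fun hEq => hne (by rw [hEq])
    by_cases hl1 : x1.1.length < n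
    · have hd : (Gn n).dist (va x1) (va x1) = (Gn n).dist (va x2) (va x1) := (h x1 hl1).1
      rw [SimpleGraph.dist_self] at hd
      have := (reach_aa x2 x1).pos_dist_of_ne (ne_aa (Ne.symm hx12))
      omega
    by_cases hl2 : x2.1.length < n
    · have hd : (Gn n).dist (va x1) (va x2) = (Gn n).dist (va x2) (va x2) := (h x2 hl2).1
      rw [SimpleGraph.dist_self] at hd
      have := (reach_aa x1 x2).pos_dist_of_ne (ne_aa hx12)
      omega
    · have hlen1 : x1.1.length = n := by have := x1.2.1; omega
      have hlen2 : x2.1.length = n := by have := x2.2.1; omega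
      have hpref : ∀ x : Ln n, x.1.length < n → (x.1 <+: x1.1 ↔ x.1 <+: x2.1) := by
        intro x hx
        have hd : (Gn n).dist (va x1) (va x) = (Gn n).dist (va x2) (va x) := (h x hx).1
        have hnx1 : x ≠ x1 := fun hEq => by rw [hEq] at hx; omega
        have hnx2 : x ≠ x2 := fun hEq => by rw [hEq] at hx; omega
        constructor
        · intro hp
          by_contra hq
          have e1 : (Gn n).dist (va x1) (va x) = 2 := by
            rw [SimpleGraph.dist_comm]; exact dist_aa hnx1 hp
          have e2 : (Gn n).dist (va x2) (va x) ≠ 2 := by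
            rw [SimpleGraph.dist_comm]
            exact dist_aa_ne_two hq (fun hc => by have := hc.length_le; omega)
          rw [e1] at hd
          exact e2 hd.symm
        · intro hp
          by_contra hq
          have e1 : (Gn n).dist (va x2) (va x) = 2 := by
            rw [SimpleGraph.dist_comm]; exact dist_aa hnx2 hp
          have e2 : (Gn n).dist (va x1) (va x) ≠ 2 := by
            rw [SimpleGraph.dist_comm]
            exact dist_aa_ne_two hq (fun hc => by have := hc.length_le; omega)
          rw [e1] at hd
          exact e2 hd
      have HH : ∀ x : List Bool, x.length < n → x.getLast? = some true →
          (x <+: x1.1 ↔ x <+: x2.1) :=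
        fun x hlt hlast => hpref ⟨x, le_of_lt hlt, Or.inr hlast⟩ hlt
      have last1 : x1.1.getLast? = some true := by
        rcases x1.2.2 with hE | hE
        · rw [hE] at hlen1; simp at hlen1; omega
        · exact hE
      have last2 : x2.1.getLast? = some true := by
        rcases x2.2.2 with hE | hE
        · rw [hE] at hlen2; simp at hlen2; omega
        · exact hE
      exact hx12 (Subtype.ext (eq_of_profile n hn hlen1 hlen2 HH last1 last2))
  -- a b
  · exfalso
    have hd : (Gn n).dist (va x1) (vd (eL n)) = (Gn n).dist (vb y2) (vd (eL n)) :=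
      (h (eL n) heLt).2
    rw [distA_De, distB_De] at hd
    omega
  -- a c
  · exfalso
    have hd : (Gn n).dist (va x1) (vd (eL n)) = (Gn n).dist (vc z2) (vd (eL n)) :=
      (h (eL n) heLt).2
    rw [distA_De, distC_De] at hd
    omega
  -- a d
  · exfalso
    have hd : (Gn n).dist (va x1) (va (eL n)) = (Gn n).dist (vd w2) (va (eL n)) :=
      (h (eL n) heLt).1
    rw [distD_Ae] at hd
    have := distAe_le x1
    omega
  -- b a
  · exfalso
    have hd : (Gn n).dist (vb y1) (vd (eL n)) = (Gn n).dist (va x2) (vd (eL n)) :=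
      (h (eL n) heLt).2
    rw [distA_De, distB_De] at hd
    omega
  -- b b
  · have hy12 : y1 ≠ y2 := fun hEq => hne (by rw [hEq])
    have hpref : ∀ x : Ln n, x.1.length < n → (x.1 <+: y1.1 ↔ x.1 <+: y2.1) := by
      intro x hx
      have hd : (Gn n).dist (vb y1) (va x) = (Gn n).dist (vb y2) (va x) := (h x hx).1
      constructor
      · intro hp
        by_contra hq
        have e1 : (Gn n).dist (vb y1) (va x) = 1 := by
          rw [SimpleGraph.dist_comm]; exact dist_ab hp
        have e2 : (Gn n).dist (vb y2) (va x) = 3 := by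
          rw [SimpleGraph.dist_comm]; exact dist_ab' hq
        rw [e1, e2] at hd
        omega
      · intro hp
        by_contra hq
        have e1 : (Gn n).dist (vb y2) (va x) = 1 := by
          rw [SimpleGraph.dist_comm]; exact dist_ab hp
        have e2 : (Gn n).dist (vb y1) (va x) = 3 := by
          rw [SimpleGraph.dist_comm]; exact dist_ab' hq
        rw [e1, e2] at hd
        omega
    have HH : ∀ x : List Bool, x.length < n → x.getLast? = some true →
        (x <+: y1.1 ↔ x <+: y2.1) :=
      fun x hlt hlast => hpref ⟨x, le_of_lt hlt, Or.inr hlast⟩ hlt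
    obtain ⟨z, hzlen, hcases⟩ :=
      pair_words n hn y1.2 y2.2 (fun hEq => hy12 (Subtype.ext hEq)) HH
    rcases hcases with ⟨hA, hB⟩ | ⟨hA, hB⟩
    · exact ⟨z, y1, y2, hzlen, hA, hB, Or.inl rfl⟩
    · exact ⟨z, y2, y1, hzlen, hB, hA, Or.inl (Set.pair_comm (vb y1) (vb y2))⟩
  -- b c
  · exfalso
    have hd : (Gn n).dist (vb y1) (vd (eL n)) = (Gn n).dist (vc z2) (vd (eL n)) :=
      (h (eL n) heLt).2
    rw [distB_De, distC_De] at hd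
    omega
  -- b d
  · exfalso
    have hd : (Gn n).dist (vb y1) (va (eL n)) = (Gn n).dist (vd w2) (va (eL n)) :=
      (h (eL n) heLt).1
    rw [distB_Ae, distD_Ae] at hd
    omega
  -- c a
  · exfalso
    have hd : (Gn n).dist (vc z1) (vd (eL n)) = (Gn n).dist (va x2) (vd (eL n)) :=
      (h (eL n) heLt).2
    rw [distC_De, distA_De] at hd
    omega
  -- c b
  · exfalso
    have hd : (Gn n).dist (vc z1) (vd (eL n)) = (Gn n).dist (vb y2) (vd (eL n)) :=
      (h (eL n) heLt).2
    rw [distC_De, distB_De] at hd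
    omega
  -- c c
  · have hz12 : z1 ≠ z2 := fun hEq => hne (by rw [hEq])
    have hpref : ∀ x : Ln n, x.1.length < n → (x.1 <+: z1.1 ↔ x.1 <+: z2.1) := by
      intro x hx
      have hd : (Gn n).dist (vc z1) (vd x) = (Gn n).dist (vc z2) (vd x) := (h x hx).2
      constructor
      · intro hp
        by_contra hq
        rw [dist_cd hp, dist_cd' hq] at hd
        omega
      · intro hp
        by_contra hq
        rw [dist_cd' hq, dist_cd hp] at hd
        omega
    have HH : ∀ x : List Bool, x.length < n → x.getLast? = some true →
        (x <+: z1.1 ↔ x <+: z2.1) :=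
      fun x hlt hlast => hpref ⟨x, le_of_lt hlt, Or.inr hlast⟩ hlt
    obtain ⟨z, hzlen, hcases⟩ :=
      pair_words n hn z1.2 z2.2 (fun hEq => hz12 (Subtype.ext hEq)) HH
    rcases hcases with ⟨hA, hB⟩ | ⟨hA, hB⟩
    · exact ⟨z, z1, z2, hzlen, hA, hB, Or.inr rfl⟩
    · exact ⟨z, z2, z1, hzlen, hB, hA, Or.inr (Set.pair_comm (vc z1) (vc z2))⟩
  -- c d
  · exfalso
    have hd : (Gn n).dist (vc z1) (va (eL n)) = (Gn n).dist (vd w2) (va (eL n)) :=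
      (h (eL n) heLt).1
    rw [distC_Ae, distD_Ae] at hd
    omega
  -- d a
  · exfalso
    have hd : (Gn n).dist (vd w1) (va (eL n)) = (Gn n).dist (va x2) (va (eL n)) :=
      (h (eL n) heLt).1
    rw [distD_Ae] at hd
    have := distAe_le x2
    omega
  -- d b
  · exfalso
    have hd : (Gn n).dist (vd w1) (va (eL n)) = (Gn n).dist (vb y2) (va (eL n)) :=
      (h (eL n) heLt).1
    rw [distD_Ae, distB_Ae] at hd
    omega
  -- d c
  · exfalso
    have hd : (Gn n).dist (vd w1) (va (eL n)) = (Gn n).dist (vc z2) (va (eL n)) :=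
      (h (eL n) heLt).1
    rw [distD_Ae, distC_Ae] at hd
    omega
  -- d d
  · exfalso
    have hw12 : w1 ≠ w2 := fun hEq => hne (by rw [hEq])
    by_cases hl1 : w1.1.length < n
    · have hd : (Gn n).dist (vd w1) (vd w1) = (Gn n).dist (vd w2) (vd w1) := (h w1 hl1).2
      rw [SimpleGraph.dist_self] at hd
      have := (reach_dd w2 w1).pos_dist_of_ne (ne_dd (Ne.symm hw12))
      omega
    by_cases hl2 : w2.1.length < n
    · have hd : (Gn n).dist (vd w1) (vd w2) = (Gn n).dist (vd w2) (vd w2) := (h w2 hl2).2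
      rw [SimpleGraph.dist_self] at hd
      have := (reach_dd w1 w2).pos_dist_of_ne (ne_dd hw12)
      omega
    · have hlen1 : w1.1.length = n := by have := w1.2.1; omega
      have hlen2 : w2.1.length = n := by have := w2.2.1; omega
      have hpref : ∀ x : Ln n, x.1.length < n → (x.1 <+: w1.1 ↔ x.1 <+: w2.1) := by
        intro x hx
        have hd : (Gn n).dist (vd w1) (vd x) = (Gn n).dist (vd w2) (vd x) := (h x hx).2
        have hnx1 : x ≠ w1 := fun hEq => by rw [hEq] at hx; omega
        have hnx2 : x ≠ w2 := fun hEq => by rw [hEq] at hx; omega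
        constructor
        · intro hp
          by_contra hq
          have e1 : (Gn n).dist (vd w1) (vd x) = 2 := by
            rw [SimpleGraph.dist_comm]; exact dist_dd hnx1 hp
          have e2 : (Gn n).dist (vd w2) (vd x) ≠ 2 := by
            rw [SimpleGraph.dist_comm]
            exact dist_dd_ne_two hq (fun hc => by have := hc.length_le; omega)
          rw [e1] at hd
          exact e2 hd.symm
        · intro hp
          by_contra hq
          have e1 : (Gn n).dist (vd w2) (vd x) = 2 := by
            rw [SimpleGraph.dist_comm]; exact dist_dd hnx2 hp
          have e2 : (Gn n).dist (vd w1) (vd x) ≠ 2 := by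
            rw [SimpleGraph.dist_comm]
            exact dist_dd_ne_two hq (fun hc => by have := hc.length_le; omega)
          rw [e1] at hd
          exact e2 hd
      have HH : ∀ x : List Bool, x.length < n → x.getLast? = some true →
          (x <+: w1.1 ↔ x <+: w2.1) :=
        fun x hlt hlast => hpref ⟨x, le_of_lt hlt, Or.inr hlast⟩ hlt
      have last1 : w1.1.getLast? = some true := by
        rcases w1.2.2 with hE | hE
        · rw [hE] at hlen1; simp at hlen1; omega
        · exact hE
      have last2 : w2.1.getLast? = some true := by
        rcases w2.2.2 with hE | hE
        · rw [hE] at hlen2; simp at hlen2; omega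
        · exact hE
      exact hw12 (Subtype.ext (eq_of_profile n hn hlen1 hlen2 HH last1 last2))
end

section
/- For integers n and k with 1 ≤ k ≤ n−2, the minimum size of a resolving set for the entire vertex set of G_{n,k} (that is, the metric dimension of G_{n,k}) equals n−1. -/
namespace GnkAux

variable {n k : ℕ}

lemma adj_lr {i : Fin n} {A : {A : Finset (Fin n) // A.card = k}} (h : i ∉ A.1) :
    (Gnk n k).Adj (Sum.inl i) (Sum.inr A) := h

lemma adj_rl {i : Fin n} {A : {A : Finset (Fin n) // A.card = k}} (h : i ∉ A.1) :
    (Gnk n k).Adj (Sum.inr A) (Sum.inl i) := h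

lemma adj_rr {A B : {A : Finset (Fin n) // A.card = k}} (h : A ≠ B) :
    (Gnk n k).Adj (Sum.inr A) (Sum.inr B) := h

lemma exists_avoid (hkn : k ≤ n - 2) (i j : Fin n) :
    ∃ B : Finset (Fin n), B.card = k ∧ i ∉ B ∧ j ∉ B := by
  have hc : ({i, j} : Finset (Fin n)).card ≤ 2 :=
    (Finset.card_insert_le _ _).trans (by simp)
  have hsub : k ≤ ((Finset.univ : Finset (Fin n)) \ {i, j}).card := by
    rw [Finset.card_sdiff_of_subset (Finset.subset_univ _), Finset.card_univ, Fintype.card_fin]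
    omega
  obtain ⟨B, hB, hcard⟩ := Finset.exists_subset_card_eq hsub
  refine ⟨B, hcard, fun h => ?_, fun h => ?_⟩ <;>
  · rcases Finset.mem_sdiff.mp (hB h) with ⟨-, hm⟩
    simp at hm

private lemma dist_eq_two' {V : Type*} {G : SimpleGraph V} {u v : V} (hne : u ≠ v)
    (hadj : ¬ G.Adj u v) (w : G.Walk u v) (hw : w.length = 2) : G.dist u v = 2 := by
  have h1 : G.dist u v ≤ 2 := hw ▸ SimpleGraph.dist_le w
  have h0 : G.dist u v ≠ 0 :=
    SimpleGraph.dist_ne_zero_iff_ne_and_reachable.mpr ⟨hne, ⟨w⟩⟩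
  have hone : G.dist u v ≠ 1 := fun h => hadj (SimpleGraph.dist_eq_one_iff_adj.mp h)
  omega

lemma dist_rr {A B : {A : Finset (Fin n) // A.card = k}} (h : A ≠ B) :
    (Gnk n k).dist (Sum.inr A) (Sum.inr B) = 1 :=
  SimpleGraph.dist_eq_one_iff_adj.mpr (adj_rr h)

lemma dist_lr_of_not_mem {i : Fin n} {A : {A : Finset (Fin n) // A.card = k}} (h : i ∉ A.1) :
    (Gnk n k).dist (Sum.inl i) (Sum.inr A) = 1 :=
  SimpleGraph.dist_eq_one_iff_adj.mpr (adj_lr h)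

lemma dist_rl_of_not_mem {i : Fin n} {A : {A : Finset (Fin n) // A.card = k}} (h : i ∉ A.1) :
    (Gnk n k).dist (Sum.inr A) (Sum.inl i) = 1 :=
  SimpleGraph.dist_eq_one_iff_adj.mpr (adj_rl h)

lemma dist_lr_of_mem (hkn : k ≤ n - 2) {i : Fin n} {A : {A : Finset (Fin n) // A.card = k}}
    (h : i ∈ A.1) : (Gnk n k).dist (Sum.inl i) (Sum.inr A) = 2 := by
  obtain ⟨B, hBc, hiB, -⟩ := exists_avoid hkn i i
  have hne : (⟨B, hBc⟩ : {A : Finset (Fin n) // A.card = k}) ≠ A := by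
    intro e
    rw [← e] at h
    exact hiB h
  refine dist_eq_two' (by simp) (fun hadj => hadj h)
    (SimpleGraph.Walk.cons (adj_lr hiB) (SimpleGraph.Walk.cons (adj_rr hne) SimpleGraph.Walk.nil))
    (by simp)

lemma dist_rl_of_mem (hkn : k ≤ n - 2) {i : Fin n} {A : {A : Finset (Fin n) // A.card = k}}
    (h : i ∈ A.1) : (Gnk n k).dist (Sum.inr A) (Sum.inl i) = 2 := by
  rw [SimpleGraph.dist_comm]; exact dist_lr_of_mem hkn h

lemma dist_ll (hkn : k ≤ n - 2) {i j : Fin n} (h : i ≠ j) :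
    (Gnk n k).dist (Sum.inl i) (Sum.inl j) = 2 := by
  obtain ⟨B, hBc, hiB, hjB⟩ := exists_avoid hkn i j
  exact dist_eq_two' (by simp [h]) (fun hadj => hadj)
    (SimpleGraph.Walk.cons (adj_lr (A := ⟨B, hBc⟩) hiB)
      (SimpleGraph.Walk.cons (adj_rl hjB) SimpleGraph.Walk.nil)) (by simp)

lemma le_choose (m s : ℕ) (h1 : 1 ≤ s) (h2 : s ≤ m - 1) : m ≤ m.choose s := by
  induction m generalizing s with
  | zero => omega
  | succ m ih =>
    rcases eq_or_lt_of_le h1 with h | h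
    · rw [← h, Nat.choose_one_right]
    · rcases Nat.lt_or_ge s m with hs | hs
      · have h3 : m ≤ m.choose s := ih s (by omega) (by omega)
        have h4 : 0 < m.choose (s - 1) := Nat.choose_pos (by omega)
        obtain ⟨t, rfl⟩ : ∃ t, s = t + 1 := ⟨s - 1, by omega⟩
        rw [Nat.choose_succ_succ]
        simp only [Nat.add_sub_cancel] at h4
        simp only [Nat.succ_eq_add_one] at *
        omega
      · have hsm : s = m := by omega
        subst hsm
        rw [Nat.choose_succ_self_right]

end GnkAux

/-- For `1 ≤ k ≤ n - 2`, the metric dimension of `G_{n,k}` — the minimum size of a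
resolving set for the entire vertex set — equals `n - 1`. -/
theorem stmt18 (n k : ℕ) (hk : 1 ≤ k) (hkn : k ≤ n - 2) :
    IsLeast {m : ℕ | ∃ S : Set (Vnk n k), S.ncard = m ∧
      ∀ u u' : Vnk n k, u ≠ u' →
        ∃ s ∈ S, (Gnk n k).dist u s ≠ (Gnk n k).dist u' s} (n - 1) := by
  have hn : 3 ≤ n := by omega
  classical
  constructor
  · -- membership: the set {v_i : i < n-1} resolves
    set last : Fin n := ⟨n - 1, by omega⟩ with hlast
    set F : Finset (Fin n) := Finset.Iio last with hF
    have hFcard : F.card = n - 1 := by rw [hF, Fin.card_Iio]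
    have hmemF : ∀ i : Fin n, i ∈ F ↔ i ≠ last := by
      intro i
      have hi := i.isLt
      rw [hF, Finset.mem_Iio, Fin.lt_def]
      constructor
      · intro h e
        rw [e] at h
        omega
      · intro h
        have : i.val ≠ n - 1 := fun e => h (Fin.ext e)
        simp only [hlast]
        omega
    have hexF : ∀ A : Finset (Fin n), A.card = k → ∃ m, m ∈ F ∧ m ∉ A := by
      intro A hA
      by_contra hcon
      push_neg at hcon
      have := Finset.card_le_card (fun m hm => hcon m hm)
      rw [hFcard, hA] at this
      omega
    have htrace : ∀ A B : Finset (Fin n), A.card = k → B.card = k → A ∩ F = B ∩ F → A = B := by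
      intro A B hA hB hAB
      have hdA : A \ F ⊆ {last} := by
        intro x hx
        rcases Finset.mem_sdiff.mp hx with ⟨-, hxF⟩
        simp only [Finset.mem_singleton]
        by_contra hne
        exact hxF ((hmemF x).mpr hne)
      have hdB : B \ F ⊆ {last} := by
        intro x hx
        rcases Finset.mem_sdiff.mp hx with ⟨-, hxF⟩
        simp only [Finset.mem_singleton]
        by_contra hne
        exact hxF ((hmemF x).mpr hne)
      have h1 := Finset.card_inter_add_card_sdiff A F
      have h2 := Finset.card_inter_add_card_sdiff B F
      rw [hAB] at h1
      have hcd : (A \ F).card = (B \ F).card := by omega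
      have hsd : A \ F = B \ F := by
        rcases Finset.subset_singleton_iff.mp hdA with e1 | e1 <;>
          rcases Finset.subset_singleton_iff.mp hdB with e2 | e2 <;>
            simp [e1, e2] at hcd ⊢
      calc A = A \ F ∪ A ∩ F := (Finset.sdiff_union_inter A F).symm
        _ = B \ F ∪ B ∩ F := by rw [hsd, hAB]
        _ = B := Finset.sdiff_union_inter B F
    refine ⟨↑(F.image (Sum.inl : Fin n → Vnk n k)), ?_, ?_⟩
    · rw [Set.ncard_coe_finset, Finset.card_image_of_injective _ Sum.inl_injective, hFcard]
    · have hmemS : ∀ i : Fin n, i ∈ F →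
          (Sum.inl i : Vnk n k) ∈ (↑(F.image (Sum.inl : Fin n → Vnk n k)) : Set (Vnk n k)) := by
        intro i hi
        simp only [Finset.coe_image, Set.mem_image, Finset.mem_coe]
        exact ⟨i, hi, rfl⟩
      rintro (i | A) (i' | A') hne
      · -- v vs v
        have hii : i ≠ i' := fun e => hne (by rw [e])
        by_cases hi : i = last
        · have hi' : i' ∈ F := (hmemF i').mpr (fun e => hii (by rw [hi, e]))
          refine ⟨Sum.inl i', hmemS i' hi', ?_⟩
          rw [GnkAux.dist_ll hkn hii, SimpleGraph.dist_self]
          omega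
        · refine ⟨Sum.inl i, hmemS i ((hmemF i).mpr hi), ?_⟩
          rw [SimpleGraph.dist_self, GnkAux.dist_ll hkn (Ne.symm hii)]
          omega
      · -- v vs w
        by_cases hi : i = last
        · obtain ⟨m, hmF, hmA⟩ := hexF A'.1 A'.2
          have hmlast : i ≠ m := fun e => ((hmemF m).mp hmF) (by rw [← e, hi])
          refine ⟨Sum.inl m, hmemS m hmF, ?_⟩
          rw [GnkAux.dist_ll hkn hmlast, GnkAux.dist_rl_of_not_mem hmA]
          omega
        · refine ⟨Sum.inl i, hmemS i ((hmemF i).mpr hi), ?_⟩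
          rw [SimpleGraph.dist_self]
          by_cases hiA : i ∈ A'.1
          · rw [GnkAux.dist_rl_of_mem hkn hiA]; omega
          · rw [GnkAux.dist_rl_of_not_mem hiA]; omega
      · -- w vs v
        by_cases hi : i' = last
        · obtain ⟨m, hmF, hmA⟩ := hexF A.1 A.2
          have hmlast : i' ≠ m := fun e => ((hmemF m).mp hmF) (by rw [← e, hi])
          refine ⟨Sum.inl m, hmemS m hmF, ?_⟩
          rw [GnkAux.dist_ll hkn hmlast, GnkAux.dist_rl_of_not_mem hmA]
          omega
        · refine ⟨Sum.inl i', hmemS i' ((hmemF i').mpr hi), ?_⟩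
          rw [SimpleGraph.dist_self]
          by_cases hiA : i' ∈ A.1
          · rw [GnkAux.dist_rl_of_mem hkn hiA]; omega
          · rw [GnkAux.dist_rl_of_not_mem hiA]; omega
      · -- w vs w
        have hAA : A.1 ≠ A'.1 := by
          intro e
          exact hne (by rw [Subtype.ext e])
        have hAF : A.1 ∩ F ≠ A'.1 ∩ F := fun e => hAA (htrace _ _ A.2 A'.2 e)
        obtain ⟨mm, hmmF, hmm⟩ :
            ∃ m, m ∈ F ∧ ((m ∈ A.1 ∧ m ∉ A'.1) ∨ (m ∉ A.1 ∧ m ∈ A'.1)) := by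
          by_contra hcon2
          apply hAF
          ext x
          simp only [Finset.mem_inter]
          constructor
          · rintro ⟨hx, hxF⟩
            refine ⟨?_, hxF⟩
            by_contra hq
            exact hcon2 ⟨x, hxF, Or.inl ⟨hx, hq⟩⟩
          · rintro ⟨hx, hxF⟩
            refine ⟨?_, hxF⟩
            by_contra hq
            exact hcon2 ⟨x, hxF, Or.inr ⟨hq, hx⟩⟩
        refine ⟨Sum.inl mm, hmemS mm hmmF, ?_⟩
        rcases hmm with ⟨h1, h2⟩ | ⟨h1, h2⟩
        · rw [GnkAux.dist_rl_of_mem hkn h1, GnkAux.dist_rl_of_not_mem h2]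
          omega
        · rw [GnkAux.dist_rl_of_not_mem h1, GnkAux.dist_rl_of_mem hkn h2]
          omega
  · -- lower bound
    rintro m ⟨S, hScard, hres⟩
    by_contra hcon
    push_neg at hcon
    set VS : Finset (Fin n) := Finset.univ.filter (fun i => Sum.inl i ∈ S) with hVS
    set WS : Finset {A : Finset (Fin n) // A.card = k} :=
      Finset.univ.filter (fun A => Sum.inr A ∈ S) with hWS
    have hcard_le : VS.card + WS.card ≤ m := by
      have hsub : ↑(VS.image (Sum.inl : Fin n → Vnk n k) ∪ WS.image Sum.inr) ⊆ S := by
        intro x hx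
        simp only [Finset.coe_union, Set.mem_union, Finset.coe_image, Set.mem_image,
          Finset.mem_coe, hVS, hWS, Finset.mem_filter, Finset.mem_univ, true_and] at hx
        rcases hx with ⟨i, hi, rfl⟩ | ⟨A, hA, rfl⟩ <;> assumption
      have h1 := Set.ncard_le_ncard hsub (Set.toFinite S)
      rw [Set.ncard_coe_finset, hScard] at h1
      refine le_trans (le_of_eq ?_) h1
      rw [Finset.card_union_of_disjoint, Finset.card_image_of_injective _ Sum.inl_injective,
        Finset.card_image_of_injective _ Sum.inr_injective]
      simp [Finset.disjoint_left]
    set T : Finset (Fin n) := Finset.univ \ VS with hT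
    have hTcard : T.card = n - VS.card := by
      rw [hT, Finset.card_sdiff_of_subset (Finset.subset_univ _), Finset.card_univ, Fintype.card_fin]
    have hVSle : VS.card ≤ n := by
      have := Finset.card_le_card (Finset.subset_univ VS)
      simpa using this
    have hb2 : WS.card + 2 ≤ T.card := by omega
    set s := min k (T.card - 1) with hs
    have hs1 : 1 ≤ s := by omega
    have hsk : s ≤ k := by omega
    have hra : k - s ≤ VS.card := by omega
    obtain ⟨R, hRsub, hRcard⟩ := Finset.exists_subset_card_eq hra
    have hdisjRT : Disjoint R T := by
      rw [Finset.disjoint_left]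
      intro x hxR hxT
      rw [hT, Finset.mem_sdiff] at hxT
      exact hxT.2 (hRsub hxR)
    set Fam := (T.powersetCard s).image (fun C => R ∪ C) with hFam
    have hrec : ∀ C ∈ T.powersetCard s, (R ∪ C) ∩ T = C := by
      intro C hC
      have hCT : C ⊆ T := (Finset.mem_powersetCard.mp hC).1
      rw [Finset.union_inter_distrib_right,
        Finset.inter_eq_left.mpr hCT,
        (Finset.disjoint_left.mp hdisjRT |> fun h => Finset.eq_empty_iff_forall_notMem.mpr
          (fun x hx => (Finset.mem_inter.mp hx).2 |> h (Finset.mem_inter.mp hx).1))]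
      simp
    have hFamcard : Fam.card = (T.card).choose s := by
      rw [hFam, Finset.card_image_of_injOn, Finset.card_powersetCard]
      intro C1 h1 C2 h2 he
      have e1 := hrec C1 (by simpa using h1)
      have e2 := hrec C2 (by simpa using h2)
      dsimp only at he
      rw [← e1, he, e2]
    have hFamBig : WS.card + 2 ≤ Fam.card := by
      have := GnkAux.le_choose T.card s hs1 (by omega)
      omega
    have h2le : 2 ≤ (Fam \ WS.image Subtype.val).card := by
      have h := Finset.le_card_sdiff (WS.image Subtype.val) Fam
      have h' : (WS.image Subtype.val).card ≤ WS.card := Finset.card_image_le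
      omega
    obtain ⟨B1, hB1, B2, hB2, hBne⟩ := Finset.one_lt_card.mp
      (show 1 < (Fam \ WS.image Subtype.val).card by omega)
    have key : ∀ B ∈ Fam \ WS.image Subtype.val, ∃ hc : B.card = k,
        ((⟨B, hc⟩ : {A : Finset (Fin n) // A.card = k}) ∉ WS) ∧
        ∀ v ∈ VS, (v ∈ B ↔ v ∈ R) := by
      intro B hB
      rcases Finset.mem_sdiff.mp hB with ⟨hBF, hBW⟩
      rw [hFam, Finset.mem_image] at hBF
      obtain ⟨C, hC, rfl⟩ := hBF
      obtain ⟨hCT, hCcard⟩ := Finset.mem_powersetCard.mp hC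
      have hdisjRC : Disjoint R C := hdisjRT.mono_right hCT
      have hc : (R ∪ C).card = k := by
        rw [Finset.card_union_of_disjoint hdisjRC, hRcard, hCcard]
        omega
      refine ⟨hc, ?_, ?_⟩
      · intro hmem
        exact hBW (Finset.mem_image.mpr ⟨⟨R ∪ C, hc⟩, hmem, rfl⟩)
      · intro v hv
        constructor
        · intro hvB
          rcases Finset.mem_union.mp hvB with h | h
          · exact h
          · exact absurd (hCT h) (by rw [hT, Finset.mem_sdiff]; simp [hv])
        · intro hvR
          exact Finset.mem_union_left _ hvR
    obtain ⟨hc1, hW1, htr1⟩ := key B1 hB1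
    obtain ⟨hc2, hW2, htr2⟩ := key B2 hB2
    have hneq : (Sum.inr ⟨B1, hc1⟩ : Vnk n k) ≠ Sum.inr ⟨B2, hc2⟩ := by
      intro e
      apply hBne
      have := Sum.inr_injective e
      exact congrArg Subtype.val this
    obtain ⟨s0, hs0S, hs0d⟩ := hres _ _ hneq
    rcases s0 with i | A
    · have hiVS : i ∈ VS := by rw [hVS]; simp [hs0S]
      by_cases hiR : i ∈ R
      · rw [GnkAux.dist_rl_of_mem hkn ((htr1 i hiVS).mpr hiR),
          GnkAux.dist_rl_of_mem hkn ((htr2 i hiVS).mpr hiR)] at hs0d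
        exact hs0d rfl
      · rw [GnkAux.dist_rl_of_not_mem (fun h => hiR ((htr1 i hiVS).mp h)),
          GnkAux.dist_rl_of_not_mem (fun h => hiR ((htr2 i hiVS).mp h))] at hs0d
        exact hs0d rfl
    · have hAWS : A ∈ WS := by rw [hWS]; simp [hs0S]
      have hA1 : (⟨B1, hc1⟩ : {A : Finset (Fin n) // A.card = k}) ≠ A := by
        intro e
        rw [e] at hW1
        exact hW1 hAWS
      have hA2 : (⟨B2, hc2⟩ : {A : Finset (Fin n) // A.card = k}) ≠ A := by
        intro e
        rw [e] at hW2
        exact hW2 hAWS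
      rw [GnkAux.dist_rr hA1, GnkAux.dist_rr hA2] at hs0d
      exact hs0d rfl
end
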